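/- arXiv:2305.18258 — 11 statements merged into one kernel-verified Lean document; each statement's English description precedes it below -/
import Mathlib

section
/- Let K and H be positive integers and let c > 0, eta > 0, B > 0, M > 0, d >= 0, eps >= 0 be real numbers. Suppose we are given real numbers a_k, b_k, Delta_k for k in {1,...,K} and nonnegative real numbers e(k,h,s) for k in {1,...,K}, h in {1,...,H}, s in {1,...,k-1}, such that: (i) sum_{k=1}^K a_k <= eta * sum_{k=1}^K Delta_k; (ii) for every k, Delta_k <= -c * sum_{h=1}^H sum_{s=1}^{k-1} e(k,h,s) + c*B*M; (iii) for every mu > 0, sum_{k=1}^K b_k <= (mu/2) * sum_{k=1}^K sum_{h=1}^H sum_{s=1}^{k-1} e(k,h,s) + d/(2*mu) + sqrt(d*H*K) + eps*H*K. Then sum_{k=1}^K (a_k + b_k) <= c*eta*B*K*M + d/(4*c*eta) + sqrt(d*H*K) + eps*H*K. -/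
open Finset

/-- Deterministic core of the regret analysis of MEX (Theorem 4.1). -/
theorem stmt0 (K H : ℕ) (hK : 0 < K) (hH : 0 < H)
    (c η B M d eps : ℝ) (hc : 0 < c) (hη : 0 < η) (hB : 0 < B) (hM : 0 < M)
    (hd : 0 ≤ d) (heps : 0 ≤ eps)
    (a b Δ : ℕ → ℝ) (e : ℕ → ℕ → ℕ → ℝ)
    (he : ∀ k ∈ Icc 1 K, ∀ h ∈ Icc 1 H, ∀ s ∈ Icc 1 (k - 1), 0 ≤ e k h s)
    (h1 : ∑ k ∈ Icc 1 K, a k ≤ η * ∑ k ∈ Icc 1 K, Δ k)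
    (h2 : ∀ k ∈ Icc 1 K,
      Δ k ≤ -c * ∑ h ∈ Icc 1 H, ∑ s ∈ Icc 1 (k - 1), e k h s + c * B * M)
    (h3 : ∀ μ : ℝ, 0 < μ →
      ∑ k ∈ Icc 1 K, b k ≤
        μ / 2 * ∑ k ∈ Icc 1 K, ∑ h ∈ Icc 1 H, ∑ s ∈ Icc 1 (k - 1), e k h s
        + d / (2 * μ) + Real.sqrt (d * H * K) + eps * H * K) :
    ∑ k ∈ Icc 1 K, (a k + b k) ≤
      c * η * B * K * M + d / (4 * (c * η)) + Real.sqrt (d * H * K) + eps * H * K := by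
  set S := ∑ k ∈ Icc 1 K, ∑ h ∈ Icc 1 H, ∑ s ∈ Icc 1 (k - 1), e k h s with hS
  have hΔ : ∑ k ∈ Icc 1 K, Δ k ≤ -c * S + K * (c * B * M) := by
    calc ∑ k ∈ Icc 1 K, Δ k
        ≤ ∑ k ∈ Icc 1 K, (-c * ∑ h ∈ Icc 1 H, ∑ s ∈ Icc 1 (k - 1), e k h s + c * B * M) :=
          Finset.sum_le_sum h2
      _ = -c * S + K * (c * B * M) := by
          rw [Finset.sum_add_distrib, ← Finset.mul_sum, Finset.sum_const,
            Nat.card_Icc, nsmul_eq_mul]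
          push_cast
          ring
  have ha : ∑ k ∈ Icc 1 K, a k ≤ η * (-c * S + K * (c * B * M)) :=
    h1.trans (by nlinarith [hΔ])
  have hμ : (0:ℝ) < 2 * (c * η) := by positivity
  have hb := h3 (2 * (c * η)) hμ
  have hbd : 2 * (c * η) / 2 * S + d / (2 * (2 * (c * η)))
      = c * η * S + d / (4 * (c * η)) := by ring_nf
  rw [Finset.sum_add_distrib]
  nlinarith [hb, ha]
end

section
/- Let K and H be positive integers and let c > 0, d >= 1, B >= 1, and M >= H be real numbers. Set eta = sqrt(d/(M*B*K)) and eps = 1/sqrt(H*K). Suppose we are given real numbers a_k, b_k, Delta_k for k in {1,...,K} and nonnegative real numbers e(k,h,s) for k in {1,...,K}, h in {1,...,H}, s in {1,...,k-1}, such that: (i) sum_{k=1}^K a_k <= eta * sum_{k=1}^K Delta_k; (ii) for every k, Delta_k <= -c * sum_{h=1}^H sum_{s=1}^{k-1} e(k,h,s) + c*B*M; (iii) for every mu > 0, sum_{k=1}^K b_k <= (mu/2) * sum_{k=1}^K sum_{h=1}^H sum_{s=1}^{k-1} e(k,h,s) + d/(2*mu) + sqrt(d*H*K) + eps*H*K.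 Then sum_{k=1}^K (a_k + b_k) <= (c + 1/(4*c) + 2) * sqrt(d*M*B*K). -/
open Finset

set_option maxHeartbeats 1000000 in
/-- Theorem 4.1 of the paper (online regret of MEX), deterministic form. -/
theorem stmt1 (K H : ℕ) (hK : 0 < K) (hH : 0 < H)
    (c d B M : ℝ) (hc : 0 < c) (hd : 1 ≤ d) (hB : 1 ≤ B) (hM : (H : ℝ) ≤ M)
    (η eps : ℝ) (hη : η = Real.sqrt (d / (M * B * K)))
    (heps : eps = 1 / Real.sqrt (H * K))
    (a b Δ : ℕ → ℝ) (e : ℕ → ℕ → ℕ → ℝ)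
    (he : ∀ k ∈ Icc 1 K, ∀ h ∈ Icc 1 H, ∀ s ∈ Icc 1 (k - 1), 0 ≤ e k h s)
    (h1 : ∑ k ∈ Icc 1 K, a k ≤ η * ∑ k ∈ Icc 1 K, Δ k)
    (h2 : ∀ k ∈ Icc 1 K,
      Δ k ≤ -c * ∑ h ∈ Icc 1 H, ∑ s ∈ Icc 1 (k - 1), e k h s + c * B * M)
    (h3 : ∀ μ : ℝ, 0 < μ →
      ∑ k ∈ Icc 1 K, b k ≤
        μ / 2 * ∑ k ∈ Icc 1 K, ∑ h ∈ Icc 1 H, ∑ s ∈ Icc 1 (k - 1), e k h s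
        + d / (2 * μ) + Real.sqrt (d * H * K) + eps * H * K) :
    ∑ k ∈ Icc 1 K, (a k + b k) ≤
      (c + 1 / (4 * c) + 2) * Real.sqrt (d * M * B * K) := by
  have hK1 : (1:ℝ) ≤ (K:ℝ) := by exact_mod_cast hK
  have hH1 : (1:ℝ) ≤ (H:ℝ) := by exact_mod_cast hH
  have hM1 : (1:ℝ) ≤ M := hH1.trans hM
  have hd0 : (0:ℝ) < d := lt_of_lt_of_le one_pos hd
  have hB0 : (0:ℝ) < B := lt_of_lt_of_le one_pos hB
  have hM0 : (0:ℝ) < M := lt_of_lt_of_le one_pos hM1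
  have hK0 : (0:ℝ) < (K:ℝ) := lt_of_lt_of_le one_pos hK1
  have hH0 : (0:ℝ) < (H:ℝ) := lt_of_lt_of_le one_pos hH1
  have hP : (0:ℝ) < M * B * K := mul_pos (mul_pos hM0 hB0) hK0
  set A := Real.sqrt (d * M * B * K) with hA
  set S := ∑ k ∈ Icc 1 K, ∑ h ∈ Icc 1 H, ∑ s ∈ Icc 1 (k - 1), e k h s with hSdef
  clear_value A S
  have hη0 : 0 < η := by
    rw [hη]; exact Real.sqrt_pos.mpr (div_pos hd0 hP)
  have hη2 : η ^ 2 = d / (M * B * K) := by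
    rw [hη, Real.sq_sqrt (le_of_lt (div_pos hd0 hP))]
  have key1 : η * (M * B * K) = A := by
    have h : (η * (M * B * K)) ^ 2 = d * M * B * K := by
      rw [mul_pow, hη2]; field_simp
    rw [hA, ← h, Real.sqrt_sq (le_of_lt (mul_pos hη0 hP))]
  have key2 : d / η = A := by
    have h : (d / η) ^ 2 = d * M * B * K := by
      rw [div_pow, hη2]; field_simp
    rw [hA, ← h, Real.sqrt_sq (le_of_lt (div_pos hd0 hη0))]
  have hΔ : ∑ k ∈ Icc 1 K, Δ k ≤ -c * S + (K : ℝ) * (c * B * M) := by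
    calc ∑ k ∈ Icc 1 K, Δ k
        ≤ ∑ k ∈ Icc 1 K,
            (-c * ∑ h ∈ Icc 1 H, ∑ s ∈ Icc 1 (k - 1), e k h s + c * B * M) :=
          Finset.sum_le_sum h2
      _ = -c * S + (K : ℝ) * (c * B * M) := by
          rw [Finset.sum_add_distrib, ← Finset.mul_sum, Finset.sum_const,
            Nat.card_Icc]
          simp [hSdef]
  have ha : ∑ k ∈ Icc 1 K, a k ≤ η * (-c * S + (K : ℝ) * (c * B * M)) :=
    h1.trans (mul_le_mul_of_nonneg_left hΔ hη0.le)
  have hb := h3 (2 * η * c) (mul_pos (mul_pos two_pos hη0) hc)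
  have heps' : eps * H * K = Real.sqrt ((H : ℝ) * K) := by
    have h : eps * H * K = ((H : ℝ) * K) / Real.sqrt ((H : ℝ) * K) := by
      rw [heps]; ring
    rw [h, Real.div_sqrt]
  have hHKle : (H : ℝ) * K ≤ M * B * K := by
    nlinarith [mul_le_mul_of_nonneg_right hM hK0.le,
      mul_nonneg (mul_nonneg hM0.le hK0.le) (sub_nonneg.mpr hB)]
  have hb1 : Real.sqrt (d * H * K) ≤ A := by
    rw [hA]; apply Real.sqrt_le_sqrt
    nlinarith [mul_le_mul_of_nonneg_left hHKle hd0.le]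
  have hb2 : Real.sqrt ((H : ℝ) * K) ≤ A := by
    rw [hA]; apply Real.sqrt_le_sqrt
    nlinarith [hHKle, mul_le_mul_of_nonneg_right hd hP.le]
  have hq : d / (2 * (2 * η * c)) = (d / η) * (1 / (4 * c)) := by
    rw [div_mul_div_comm, mul_one]
    congr 1
    ring
  rw [key2] at hq
  have r1 : η * (-c * S + (K : ℝ) * (c * B * M)) =
      -(η * c * S) + c * (η * (M * B * K)) := by ring
  rw [key1] at r1
  have r2 : 2 * η * c / 2 * S = η * c * S := by ring
  have efin : (c + 1 / (4 * c) + 2) * A = c * A + A * (1 / (4 * c)) + A + A := by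
    ring
  rw [Finset.sum_add_distrib, efin]
  linarith [ha, hb, r1, r2, hq, hb1, hb2, heps'.le, heps'.ge]
end

section
/- Let K and H be positive integers and let c1 > 0, c2 > 0, d >= 1, B >= 1, and M >= H be real numbers. Set eta = sqrt(d/(M*B*K)) and eps = 1/sqrt(H*K). Suppose we are given real numbers a_k, b_k, a'_k, b'_k, Delta_k, Delta'_k for k in {1,...,K} and nonnegative real numbers ef(k,h,s) and eg(k,h,s) for k in {1,...,K}, h in {1,...,H}, s in {1,...,k-1}, such that: (i) sum_k a_k <= eta * sum_k Delta_k; (ii) for every k, Delta_k <= -c1 * sum_{h,s<k} ef(k,h,s) + c1*B*M; (iii) for every zeta > 0, sum_k b_k <= (zeta/2) * sum_{k,h,s<k} ef(k,h,s) + d/(2*zeta) + sqrt(d*H*K) + eps*H*K; (iv) sum_k a'_k <= eta * sum_k Delta'_k; (v) for every k, Delta'_k <= -c2 * sum_{h,s<k} eg(k,h,s) + c2*B*M; (vi) for every zeta > 0, sum_k b'_k <= (zeta/2) * sum_{k,h,s<k} eg(k,h,s) + d/(2*zeta) + sqrt(d*H*K) + eps*H*K. Then sum_{k=1}^K (a_k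 + b_k + a'_k + b'_k) <= (c1 + c2 + 1/(4*c1) + 1/(4*c2) + 4) * sqrt(d*M*B*K). -/
open Finset

set_option maxHeartbeats 1000000 in
/-- Theorem 6.1 of the paper (online regret of MEX-MG), deterministic form. -/
theorem stmt2 (K H : ℕ) (hK : 0 < K) (hH : 0 < H)
    (c1 c2 d B M : ℝ) (hc1 : 0 < c1) (hc2 : 0 < c2)
    (hd : 1 ≤ d) (hB : 1 ≤ B) (hM : (H : ℝ) ≤ M)
    (η eps : ℝ) (hη : η = Real.sqrt (d / (M * B * K)))
    (heps : eps = 1 / Real.sqrt (H * K))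
    (a b a' b' Δ Δ' : ℕ → ℝ) (ef eg : ℕ → ℕ → ℕ → ℝ)
    (hef : ∀ k ∈ Icc 1 K, ∀ h ∈ Icc 1 H, ∀ s ∈ Icc 1 (k - 1), 0 ≤ ef k h s)
    (heg : ∀ k ∈ Icc 1 K, ∀ h ∈ Icc 1 H, ∀ s ∈ Icc 1 (k - 1), 0 ≤ eg k h s)
    (h1 : ∑ k ∈ Icc 1 K, a k ≤ η * ∑ k ∈ Icc 1 K, Δ k)
    (h2 : ∀ k ∈ Icc 1 K,
      Δ k ≤ -c1 * ∑ h ∈ Icc 1 H, ∑ s ∈ Icc 1 (k - 1), ef k h s + c1 * B * M)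
    (h3 : ∀ ζ : ℝ, 0 < ζ →
      ∑ k ∈ Icc 1 K, b k ≤
        ζ / 2 * ∑ k ∈ Icc 1 K, ∑ h ∈ Icc 1 H, ∑ s ∈ Icc 1 (k - 1), ef k h s
        + d / (2 * ζ) + Real.sqrt (d * H * K) + eps * H * K)
    (h4 : ∑ k ∈ Icc 1 K, a' k ≤ η * ∑ k ∈ Icc 1 K, Δ' k)
    (h5 : ∀ k ∈ Icc 1 K,
      Δ' k ≤ -c2 * ∑ h ∈ Icc 1 H, ∑ s ∈ Icc 1 (k - 1), eg k h s + c2 * B * M)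
    (h6 : ∀ ζ : ℝ, 0 < ζ →
      ∑ k ∈ Icc 1 K, b' k ≤
        ζ / 2 * ∑ k ∈ Icc 1 K, ∑ h ∈ Icc 1 H, ∑ s ∈ Icc 1 (k - 1), eg k h s
        + d / (2 * ζ) + Real.sqrt (d * H * K) + eps * H * K) :
    ∑ k ∈ Icc 1 K, (a k + b k + a' k + b' k) ≤
      (c1 + c2 + 1 / (4 * c1) + 1 / (4 * c2) + 4) * Real.sqrt (d * M * B * K) := by

  have hK1 : (1:ℝ) ≤ K := by exact_mod_cast hK
  have hH1 : (1:ℝ) ≤ H := by exact_mod_cast hH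
  have hM1 : (1:ℝ) ≤ M := le_trans hH1 hM
  have hd0 : (0:ℝ) ≤ d := by linarith
  have hMB : (1:ℝ) ≤ M * B := by nlinarith [mul_nonneg (sub_nonneg.mpr hM1) (sub_nonneg.mpr hB)]
  have hQ1 : (1:ℝ) ≤ M * B * K := by nlinarith [mul_nonneg (sub_nonneg.mpr hMB) (sub_nonneg.mpr hK1)]
  have hQ0 : (0:ℝ) < M * B * K := by linarith
  have hqpos : 0 < Real.sqrt (M * B * K) := Real.sqrt_pos.mpr hQ0
  have hq : Real.sqrt (M * B * K) * Real.sqrt (M * B * K) = M * B * K :=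
    Real.mul_self_sqrt hQ0.le
  have hrr : Real.sqrt d * Real.sqrt d = d := Real.mul_self_sqrt hd0
  have hηeq : η = Real.sqrt d / Real.sqrt (M * B * K) := by
    rw [hη, Real.sqrt_div hd0]
  have hrpos : 0 < Real.sqrt d := Real.sqrt_pos.mpr (by linarith)
  have hηpos : 0 < η := by rw [hηeq]; positivity
  set P := Real.sqrt (d * M * B * K) with hP
  have hPsq : P = Real.sqrt d * Real.sqrt (M * B * K) := by
    rw [hP, ← Real.sqrt_mul hd0]; ring_nf
  have hP0 : 0 ≤ P := Real.sqrt_nonneg _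
  have key1 : η * (M * B * K) = P := by
    rw [hηeq, hPsq, ← hq]; field_simp; rw [Real.sqrt_sq hqpos.le]
  have hη2 : η * η = d / (M * B * K) := by
    rw [hη]; exact Real.mul_self_sqrt (by positivity)
  have key2 : d / η = P := by
    rw [← key1, eq_comm, eq_div_iff hηpos.ne']
    linear_combination (eq_div_iff hQ0.ne').mp hη2
  -- sums of discrepancies are nonneg
  set S1 := ∑ k ∈ Icc 1 K, ∑ h ∈ Icc 1 H, ∑ s ∈ Icc 1 (k - 1), ef k h s with hS1
  set S2 := ∑ k ∈ Icc 1 K, ∑ h ∈ Icc 1 H, ∑ s ∈ Icc 1 (k - 1), eg k h s with hS2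
  have hS1nn : 0 ≤ S1 := by
    apply Finset.sum_nonneg; intro k hk
    apply Finset.sum_nonneg; intro h hh
    apply Finset.sum_nonneg; intro s hs
    exact hef k hk h hh s hs
  have hS2nn : 0 ≤ S2 := by
    apply Finset.sum_nonneg; intro k hk
    apply Finset.sum_nonneg; intro h hh
    apply Finset.sum_nonneg; intro s hs
    exact heg k hk h hh s hs
  have hcard : ((Icc 1 K).card : ℝ) = K := by
    rw [Nat.card_Icc]; simp
  have hΔ : ∑ k ∈ Icc 1 K, Δ k ≤ -c1 * S1 + c1 * B * M * K := by
    calc ∑ k ∈ Icc 1 K, Δ k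
        ≤ ∑ k ∈ Icc 1 K, (-c1 * ∑ h ∈ Icc 1 H, ∑ s ∈ Icc 1 (k - 1), ef k h s
            + c1 * B * M) := Finset.sum_le_sum h2
      _ = -c1 * S1 + c1 * B * M * K := by
          rw [Finset.sum_add_distrib, ← Finset.mul_sum, Finset.sum_const,
            nsmul_eq_mul, hcard, hS1]; ring
  have hΔ' : ∑ k ∈ Icc 1 K, Δ' k ≤ -c2 * S2 + c2 * B * M * K := by
    calc ∑ k ∈ Icc 1 K, Δ' k
        ≤ ∑ k ∈ Icc 1 K, (-c2 * ∑ h ∈ Icc 1 H, ∑ s ∈ Icc 1 (k - 1), eg k h s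
            + c2 * B * M) := Finset.sum_le_sum h5
      _ = -c2 * S2 + c2 * B * M * K := by
          rw [Finset.sum_add_distrib, ← Finset.mul_sum, Finset.sum_const,
            nsmul_eq_mul, hcard, hS2]; ring
  have HA : ∑ k ∈ Icc 1 K, a k ≤ η * (-c1 * S1 + c1 * B * M * K) :=
    h1.trans (mul_le_mul_of_nonneg_left hΔ hηpos.le)
  have HA' : ∑ k ∈ Icc 1 K, a' k ≤ η * (-c2 * S2 + c2 * B * M * K) :=
    h4.trans (mul_le_mul_of_nonneg_left hΔ' hηpos.le)
  have HB := h3 (2 * η * c1) (by positivity)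
  have HB' := h6 (2 * η * c2) (by positivity)
  -- auxiliary bounds for the residual terms
  have hKpos : (0:ℝ) < K := by exact_mod_cast hK
  have hHpos : (0:ℝ) < H := by exact_mod_cast hH
  have hHK0 : (0:ℝ) < (H:ℝ) * K := mul_pos hHpos hKpos
  have s1 : (H:ℝ) * K ≤ M * B * K := by
    nlinarith [mul_le_mul_of_nonneg_right hM hKpos.le,
      mul_nonneg (mul_nonneg (by linarith : (0:ℝ) ≤ M) (by linarith : (0:ℝ) ≤ B - 1)) hKpos.le]
  have hepsHK : eps * H * K = Real.sqrt ((H:ℝ) * K) := by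
    rw [heps]
    rw [div_mul_eq_mul_div, div_mul_eq_mul_div, one_mul]
    exact Real.div_sqrt
  have hsqrtHK : Real.sqrt ((H:ℝ) * K) ≤ P := by
    rw [hP]
    apply Real.sqrt_le_sqrt
    nlinarith [s1, mul_nonneg (sub_nonneg.mpr hd) hQ0.le]
  have hsqrtdHK : Real.sqrt (d * H * K) ≤ P := by
    rw [hP]
    apply Real.sqrt_le_sqrt
    nlinarith [mul_le_mul_of_nonneg_left s1 hd0]
  have e1 : η * c1 * (B * M * K) = c1 * P := by
    rw [← key1]; ring
  have e2 : η * c2 * (B * M * K) = c2 * P := by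
    rw [← key1]; ring
  have e3 : d / (2 * (2 * η * c1)) = 1 / (4 * c1) * P := by
    rw [← key2, one_div, inv_mul_eq_div, div_div]
    congr 1; ring
  have e4 : d / (2 * (2 * η * c2)) = 1 / (4 * c2) * P := by
    rw [← key2, one_div, inv_mul_eq_div, div_div]
    congr 1; ring
  have hsplit : ∑ k ∈ Icc 1 K, (a k + b k + a' k + b' k)
      = (∑ k ∈ Icc 1 K, a k) + (∑ k ∈ Icc 1 K, b k)
        + (∑ k ∈ Icc 1 K, a' k) + (∑ k ∈ Icc 1 K, b' k) := by
    simp [Finset.sum_add_distrib]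
  have c1half : 2 * η * c1 / 2 * S1 = η * c1 * S1 := by ring
  have c2half : 2 * η * c2 / 2 * S2 = η * c2 * S2 := by ring
  have ea : η * (-c1 * S1 + c1 * B * M * K) = -(η * c1 * S1) + c1 * P := by
    rw [← e1]; ring
  have ea' : η * (-c2 * S2 + c2 * B * M * K) = -(η * c2 * S2) + c2 * P := by
    rw [← e2]; ring
  rw [hsplit]
  rw [ea] at HA
  rw [ea'] at HA'
  rw [c1half, e3] at HB
  rw [c2half, e4] at HB'
  rw [hepsHK] at HB HB'
  have hc1P : 0 ≤ 1 / (4 * c1) * P := by positivity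
  have hc2P : 0 ≤ 1 / (4 * c2) * P := by positivity
  have target_eq : (c1 + c2 + 1 / (4 * c1) + 1 / (4 * c2) + 4) * P
      = c1 * P + c2 * P + 1 / (4 * c1) * P + 1 / (4 * c2) * P + 4 * P := by ring
  rw [target_eq]
  linarith [HA, HB, HA', HB', hsqrtHK, hsqrtdHK]
end

section
/- Let K and H be positive integers and let c1 > 0, c2 > 0, eta > 0, B > 0, M > 0, d >= 0, eps >= 0 be real numbers. Suppose we are given real numbers a_k, b_k, a'_k, b'_k, Delta_k, Delta'_k for k in {1,...,K} and nonnegative real numbers ef(k,h,s) and eg(k,h,s) for k in {1,...,K}, h in {1,...,H}, s in {1,...,k-1}, satisfying: (i) sum_k a_k <= eta * sum_k Delta_k; (ii) for every k, Delta_k <= -c1 * sum_{h,s<k} ef(k,h,s) + c1*B*M; (iii) for every zeta > 0, sum_k b_k <= (zeta/2) * sum_{k,h,s<k} ef(k,h,s) + d/(2*zeta) + sqrt(d*H*K) + eps*H*K; (iv) sum_k a'_k <= eta * sum_k Delta'_k; (v) for every k, Delta'_k <= -c2 * sum_{h,s<k} eg(k,h,s) + c2*B*M; (vi) for every zeta >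 0, sum_k b'_k <= (zeta/2) * sum_{k,h,s<k} eg(k,h,s) + d/(2*zeta) + sqrt(d*H*K) + eps*H*K. Then sum_{k=1}^K (a_k + b_k + a'_k + b'_k) <= (c1 + c2)*eta*B*K*M + d/(4*c1*eta) + d/(4*c2*eta) + 2*sqrt(d*H*K) + 2*eps*H*K. -/
open Finset

/-- Key combination lemma for one player. -/
theorem stmt3_aux (K H : ℕ) (c η B M d eps : ℝ) (hc : 0 < c) (hη : 0 < η)
    (a b Δ : ℕ → ℝ) (ef : ℕ → ℕ → ℕ → ℝ)
    (h1 : ∑ k ∈ Icc 1 K, a k ≤ η * ∑ k ∈ Icc 1 K, Δ k)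
    (h2 : ∀ k ∈ Icc 1 K,
      Δ k ≤ -c * ∑ h ∈ Icc 1 H, ∑ s ∈ Icc 1 (k - 1), ef k h s + c * B * M)
    (h3 : ∀ ζ : ℝ, 0 < ζ →
      ∑ k ∈ Icc 1 K, b k ≤
        ζ / 2 * ∑ k ∈ Icc 1 K, ∑ h ∈ Icc 1 H, ∑ s ∈ Icc 1 (k - 1), ef k h s
        + d / (2 * ζ) + Real.sqrt (d * H * K) + eps * H * K) :
    ∑ k ∈ Icc 1 K, (a k + b k) ≤
      c * η * B * K * M + d / (4 * c * η)
      + Real.sqrt (d * H * K) + eps * H * K := by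
  have hb := h3 (2 * c * η) (by positivity)
  have hΔ : ∑ k ∈ Icc 1 K, Δ k ≤
      -c * ∑ k ∈ Icc 1 K, ∑ h ∈ Icc 1 H, ∑ s ∈ Icc 1 (k - 1), ef k h s
      + c * B * M * K := by
    calc ∑ k ∈ Icc 1 K, Δ k
        ≤ ∑ k ∈ Icc 1 K, (-c * ∑ h ∈ Icc 1 H, ∑ s ∈ Icc 1 (k - 1), ef k h s + c * B * M) :=
          Finset.sum_le_sum h2
      _ = -c * ∑ k ∈ Icc 1 K, ∑ h ∈ Icc 1 H, ∑ s ∈ Icc 1 (k - 1), ef k h s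
          + c * B * M * K := by
          rw [Finset.sum_add_distrib, Finset.sum_const, ← Finset.mul_sum]
          simp [Nat.card_Icc]
          ring
  have ha : ∑ k ∈ Icc 1 K, a k ≤
      η * (-c * ∑ k ∈ Icc 1 K, ∑ h ∈ Icc 1 H, ∑ s ∈ Icc 1 (k - 1), ef k h s
      + c * B * M * K) := h1.trans (by nlinarith)
  rw [Finset.sum_add_distrib]
  have h4c : d / (2 * (2 * c * η)) = d / (4 * c * η) := by ring_nf
  have hηc : 2 * c * η / 2 * ∑ k ∈ Icc 1 K, ∑ h ∈ Icc 1 H, ∑ s ∈ Icc 1 (k - 1), ef k h s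
      = η * (c * ∑ k ∈ Icc 1 K, ∑ h ∈ Icc 1 H, ∑ s ∈ Icc 1 (k - 1), ef k h s) := by ring
  nlinarith [hb, ha]

/-- Intermediate step in the proof of Theorem 6.1 (regret of MEX-MG), before
optimizing the tuning parameter η. -/
theorem stmt3 (K H : ℕ) (hK : 0 < K) (hH : 0 < H)
    (c1 c2 η B M d eps : ℝ) (hc1 : 0 < c1) (hc2 : 0 < c2) (hη : 0 < η)
    (hB : 0 < B) (hM : 0 < M) (hd : 0 ≤ d) (heps : 0 ≤ eps)
    (a b a' b' Δ Δ' : ℕ → ℝ) (ef eg : ℕ → ℕ → ℕ → ℝ)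
    (hef : ∀ k ∈ Icc 1 K, ∀ h ∈ Icc 1 H, ∀ s ∈ Icc 1 (k - 1), 0 ≤ ef k h s)
    (heg : ∀ k ∈ Icc 1 K, ∀ h ∈ Icc 1 H, ∀ s ∈ Icc 1 (k - 1), 0 ≤ eg k h s)
    (h1 : ∑ k ∈ Icc 1 K, a k ≤ η * ∑ k ∈ Icc 1 K, Δ k)
    (h2 : ∀ k ∈ Icc 1 K,
      Δ k ≤ -c1 * ∑ h ∈ Icc 1 H, ∑ s ∈ Icc 1 (k - 1), ef k h s + c1 * B * M)
    (h3 : ∀ ζ : ℝ, 0 < ζ →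
      ∑ k ∈ Icc 1 K, b k ≤
        ζ / 2 * ∑ k ∈ Icc 1 K, ∑ h ∈ Icc 1 H, ∑ s ∈ Icc 1 (k - 1), ef k h s
        + d / (2 * ζ) + Real.sqrt (d * H * K) + eps * H * K)
    (h4 : ∑ k ∈ Icc 1 K, a' k ≤ η * ∑ k ∈ Icc 1 K, Δ' k)
    (h5 : ∀ k ∈ Icc 1 K,
      Δ' k ≤ -c2 * ∑ h ∈ Icc 1 H, ∑ s ∈ Icc 1 (k - 1), eg k h s + c2 * B * M)
    (h6 : ∀ ζ : ℝ, 0 < ζ →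
      ∑ k ∈ Icc 1 K, b' k ≤
        ζ / 2 * ∑ k ∈ Icc 1 K, ∑ h ∈ Icc 1 H, ∑ s ∈ Icc 1 (k - 1), eg k h s
        + d / (2 * ζ) + Real.sqrt (d * H * K) + eps * H * K) :
    ∑ k ∈ Icc 1 K, (a k + b k + a' k + b' k) ≤
      (c1 + c2) * η * B * K * M + d / (4 * c1 * η) + d / (4 * c2 * η)
      + 2 * Real.sqrt (d * H * K) + 2 * (eps * H * K) := by
  have H1 := stmt3_aux K H c1 η B M d eps hc1 hη a b Δ ef h1 h2 h3
  have H2 := stmt3_aux K H c2 η B M d eps hc2 hη a' b' Δ' eg h4 h5 h6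
  have : ∑ k ∈ Icc 1 K, (a k + b k + a' k + b' k)
      = ∑ k ∈ Icc 1 K, (a k + b k) + ∑ k ∈ Icc 1 K, (a' k + b' k) := by
    rw [← Finset.sum_add_distrib]; apply Finset.sum_congr rfl; intros; ring
  rw [this]; nlinarith [H1, H2]
end

section
/- Let d, K, H be positive integers and let B_W > 0, B_X > 0, eps > 0, eta > 0 be real numbers. For each h in {1,...,H} and k in {1,...,K}, let w_{h,k} and x_{h,k} be vectors in R^d with Euclidean norms ||w_{h,k}|| <= B_W and ||x_{h,k}|| <= B_X, and let ell(k,h,s) be real numbers satisfying <w_{h,k}, x_{h,s}>^2 <= ell(k,h,s) for all s in {1,...,k-1}. Set dtilde = d * log(1 + K * B_X^2 / (d * eps)). Then sum_{k=1}^K sum_{h=1}^H min{1, |<w_{h,k}, x_{h,k}>|} <= eta * sum_{k=1}^K sum_{h=1}^H sum_{s=1}^{k-1} ell(k,h,s) + H * dtilde/(2*eta) + H * min{K, 2*dtilde} + H*K*B_W*sqrt(eps). -/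
open Finset Matrix
set_option maxHeartbeats 1000000

variable {d : ℕ}


lemma myVecMulVec_mulVec (a b u : Fin d → ℝ) :
    Matrix.vecMulVec a b *ᵥ u = (b ⬝ᵥ u) • a := by
  funext i
  simp only [Matrix.mulVec, Matrix.vecMulVec, dotProduct, Pi.smul_apply, smul_eq_mul,
    Matrix.of_apply, Finset.sum_mul, Finset.mul_sum]
  exact Finset.sum_congr rfl fun j _ => by ring

lemma myDotVecMulVec (a w : Fin d → ℝ) :
    w ⬝ᵥ (Matrix.vecMulVec a a *ᵥ w) = (a ⬝ᵥ w) ^ 2 := by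
  rw [myVecMulVec_mulVec, dotProduct_smul]
  rw [dotProduct_comm]
  ring_nf

lemma myTraceVecMulVec (a : Fin d → ℝ) :
    (Matrix.vecMulVec a a).trace = a ⬝ᵥ a := by
  simp [Matrix.trace, Matrix.vecMulVec, dotProduct, Matrix.diag]

lemma mySmulOnePosDef {eps : ℝ} (heps : 0 < eps) :
    (eps • (1 : Matrix (Fin d) (Fin d) ℝ)).PosDef := by
  refine Matrix.PosDef.of_dotProduct_mulVec_pos ?_ ?_
  · unfold Matrix.IsHermitian
    rw [conjTranspose_smul]
    simp
  · intro v hv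
    have : (eps • (1 : Matrix (Fin d) (Fin d) ℝ)) *ᵥ v = eps • v := by
      simp [Matrix.smul_mulVec]
    rw [this]
    simp only [star_trivial, dotProduct_smul, smul_eq_mul]
    exact mul_pos heps (by simpa using Matrix.dotProduct_self_star_pos_iff.2 hv)

lemma myVecMulVecPosSemidef (a : Fin d → ℝ) : (Matrix.vecMulVec a a).PosSemidef := by
  refine Matrix.PosSemidef.of_dotProduct_mulVec_nonneg ?_ ?_
  · unfold Matrix.IsHermitian
    ext i j
    simp [Matrix.vecMulVec, mul_comm]
  · intro v
    rw [star_trivial, myDotVecMulVec]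
    positivity


-- scalar helpers
lemma myLogLb {u : ℝ} (hu : 0 ≤ u) : min 1 u ≤ 2 * Real.log (1 + u) := by
  rcases le_or_gt 1 u with h | h
  · rw [min_eq_left h]
    have h2 : Real.log 2 ≤ Real.log (1 + u) := by
      apply Real.log_le_log (by norm_num)
      linarith
    have := Real.log_two_gt_d9
    linarith
  · rw [min_eq_right h.le]
    have h1 : (0:ℝ) < 1 + u := by linarith
    have key : Real.log (1 + u)⁻¹ ≤ (1 + u)⁻¹ - 1 :=
      Real.log_le_sub_one_of_pos (by positivity)
    rw [Real.log_inv] at key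
    have h2 : u / (1 + u) ≤ Real.log (1 + u) := by
      have : (1+u)⁻¹ - 1 = -(u/(1+u)) := by field_simp; ring
      rw [this] at key; linarith
    have h3 : u / 2 ≤ u / (1 + u) := by
      apply div_le_div_of_nonneg_left hu h1 (by linarith)
    linarith

lemma myAmGm {a b η : ℝ} (ha : 0 ≤ a) (hb : 0 ≤ b) (hη : 0 < η) :
    Real.sqrt a * Real.sqrt b ≤ η * a + b / (4 * η) := by
  have h4 : (0:ℝ) < 4 * η := by linarith
  have key : Real.sqrt a * Real.sqrt b ≤ (4 * η ^ 2 * a + b) / (4 * η) := by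
    rw [le_div_iff₀ h4]
    nlinarith [sq_nonneg (2 * η * Real.sqrt a - Real.sqrt b), Real.sq_sqrt ha, Real.sq_sqrt hb,
      Real.sqrt_nonneg a, Real.sqrt_nonneg b]
  have heq : (4 * η ^ 2 * a + b) / (4 * η) = η * a + b / (4 * η) := by
    field_simp
  linarith [key, heq ▸ key]

-- Cauchy-Schwarz w.r.t. a posdef matrix
open scoped MatrixOrder in
lemma myCS {M : Matrix (Fin d) (Fin d) ℝ} (hM : M.PosDef) (w x : Fin d → ℝ) :
    (w ⬝ᵥ x) ^ 2 ≤ (w ⬝ᵥ (M *ᵥ w)) * (x ⬝ᵥ (M⁻¹ *ᵥ x)) := by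
  set S := CFC.sqrt M with hSdef
  have hSsym : S.IsHermitian := (Matrix.nonneg_iff_posSemidef.mp (CFC.sqrt_nonneg M)).isHermitian
  have hSS : S * S = M := CFC.sqrt_mul_sqrt_self M (Matrix.nonneg_iff_posSemidef.mpr hM.posSemidef)
  have hdetS : IsUnit S.det := by
    have : S.det * S.det = M.det := by rw [← Matrix.det_mul, hSS]
    have hMdet := hM.det_pos
    refine isUnit_iff_ne_zero.2 fun h => ?_
    rw [h, mul_zero] at this
    exact absurd this.symm (ne_of_gt hMdet)
  have hSinv : S * S⁻¹ = 1 := Matrix.mul_nonsing_inv _ hdetS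
  have hMinv : M⁻¹ = S⁻¹ * S⁻¹ := by rw [← hSS, Matrix.mul_inv_rev]
  have hST : Sᵀ = S := by simpa [Matrix.IsHermitian] using hSsym
  have hSinvSym : (S⁻¹)ᵀ = S⁻¹ := by rw [Matrix.transpose_nonsing_inv, hST]
  have e1 : w ⬝ᵥ (M *ᵥ w) = (S *ᵥ w) ⬝ᵥ (S *ᵥ w) := by
    rw [← hSS, ← Matrix.mulVec_mulVec, Matrix.dotProduct_mulVec w S,
      ← Matrix.mulVec_transpose, hST]
  have e2 : x ⬝ᵥ (M⁻¹ *ᵥ x) = (S⁻¹ *ᵥ x) ⬝ᵥ (S⁻¹ *ᵥ x) := by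
    rw [hMinv, ← Matrix.mulVec_mulVec, Matrix.dotProduct_mulVec x (S⁻¹),
      ← Matrix.mulVec_transpose, hSinvSym]
  have e3 : w ⬝ᵥ x = (S *ᵥ w) ⬝ᵥ (S⁻¹ *ᵥ x) := by
    conv_lhs => rw [show x = S *ᵥ (S⁻¹ *ᵥ x) by rw [Matrix.mulVec_mulVec, hSinv, Matrix.one_mulVec]]
    rw [Matrix.dotProduct_mulVec w S, ← Matrix.mulVec_transpose, hST]
  rw [e1, e2, e3]
  simpa [dotProduct, sq] using
    Finset.sum_mul_sq_le_sq_mul_sq Finset.univ (S *ᵥ w) (S⁻¹ *ᵥ x)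


lemma myTraceEqSumEig {M : Matrix (Fin d) (Fin d) ℝ} (hM : M.IsHermitian) :
    M.trace = ∑ i, hM.eigenvalues i := by
  conv_lhs => rw [hM.spectral_theorem, Unitary.conjStarAlgAut_apply]
  rw [Matrix.trace_mul_cycle]
  have : (star (hM.eigenvectorUnitary : Matrix (Fin d) (Fin d) ℝ)) *
      (hM.eigenvectorUnitary : Matrix (Fin d) (Fin d) ℝ) = 1 :=
    Unitary.star_mul_self_of_mem (hM.eigenvectorUnitary).2
  rw [this, Matrix.one_mul]
  simp [Matrix.trace_diagonal]

lemma myDetLeTrace {M : Matrix (Fin d) (Fin d) ℝ} (hM : M.PosDef) (hd : 0 < d) :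
    M.det ≤ (M.trace / d) ^ d := by
  have hH := hM.isHermitian
  rw [hH.det_eq_prod_eigenvalues, myTraceEqSumEig hH]
  have hpos : ∀ i ∈ Finset.univ, (0:ℝ) ≤ hH.eigenvalues i := fun i _ =>
    (hM.eigenvalues_pos i).le
  have hcard : (∑ _i : Fin d, (1:ℝ)) = d := by simp
  have hsum : (0:ℝ) < ∑ _i : Fin d, (1:ℝ) := by rw [hcard]; exact_mod_cast hd
  have := Real.geom_mean_le_arith_mean Finset.univ (fun _ => (1:ℝ)) hH.eigenvalues
    (fun _ _ => zero_le_one) hsum hpos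
  simp only [Real.rpow_one, one_mul, hcard] at this
  -- this : (∏ i, eig i) ^ ((d:ℝ))⁻¹ ≤ (∑ i, eig i) / d
  have hprod : (0:ℝ) ≤ ∏ i, hH.eigenvalues i := Finset.prod_nonneg hpos
  have h2 : ((∏ i, hH.eigenvalues i) ^ ((d:ℝ))⁻¹) ^ (d:ℕ) ≤ ((∑ i, hH.eigenvalues i) / d) ^ (d:ℕ) :=
    pow_le_pow_left₀ (Real.rpow_nonneg hprod _) this d
  rw [← Real.rpow_natCast ((∏ i, hH.eigenvalues i) ^ ((d:ℝ))⁻¹) d, ← Real.rpow_mul hprod,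
    inv_mul_cancel₀ (by exact_mod_cast hd.ne' : (d:ℝ) ≠ 0), Real.rpow_one] at h2
  exact_mod_cast h2


lemma mySqrtAdd {a b : ℝ} (ha : 0 ≤ a) (hb : 0 ≤ b) :
    Real.sqrt (a + b) ≤ Real.sqrt a + Real.sqrt b := by
  have h := Real.sqrt_le_sqrt (show a + b ≤ (Real.sqrt a + Real.sqrt b)^2 by
    nlinarith [Real.sq_sqrt ha, Real.sq_sqrt hb, Real.sqrt_nonneg a, Real.sqrt_nonneg b])
  rwa [Real.sqrt_sq (by positivity)] at h

lemma myDotSum {ι : Type*} (s : Finset ι) (u : Fin d → ℝ) (f : ι → Fin d → ℝ) :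
    u ⬝ᵥ (∑ i ∈ s, f i) = ∑ i ∈ s, u ⬝ᵥ f i := by
  simp only [dotProduct, Finset.sum_apply, Finset.mul_sum]
  rw [Finset.sum_comm]

lemma mySumMulVec {ι : Type*} (s : Finset ι) (A : ι → Matrix (Fin d) (Fin d) ℝ)
    (v : Fin d → ℝ) : (∑ i ∈ s, A i) *ᵥ v = ∑ i ∈ s, A i *ᵥ v := by
  funext j
  simp only [Matrix.mulVec, dotProduct, Matrix.sum_apply, Finset.sum_apply,
    Finset.sum_mul]
  rw [Finset.sum_comm]

lemma myKey (d K : ℕ) (hd : 0 < d) (hK : 0 < K)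
    (BW BX eps η : ℝ) (hBW : 0 < BW) (hBX : 0 < BX) (heps : 0 < eps) (hη : 0 < η)
    (w x : ℕ → Fin d → ℝ)
    (hw : ∀ k ∈ Icc 1 K, w k ⬝ᵥ w k ≤ BW ^ 2)
    (hx : ∀ k ∈ Icc 1 K, x k ⬝ᵥ x k ≤ BX ^ 2)
    (L : ℕ → ℕ → ℝ)
    (hL : ∀ k ∈ Icc 1 K, ∀ s ∈ Icc 1 (k - 1), (w k ⬝ᵥ x s) ^ 2 ≤ L k s)
    (dt : ℝ) (hdt : dt = d * Real.log (1 + K * BX ^ 2 / (d * eps))) :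
    ∑ k ∈ Icc 1 K, min 1 |w k ⬝ᵥ x k| ≤
      η * ∑ k ∈ Icc 1 K, ∑ s ∈ Icc 1 (k - 1), L k s
      + dt / (2 * η) + min (K : ℝ) (2 * dt) + K * BW * Real.sqrt eps := by
  classical
  set Sig : ℕ → Matrix (Fin d) (Fin d) ℝ :=
    fun m => eps • (1 : Matrix (Fin d) (Fin d) ℝ)
      + ∑ s ∈ Icc 1 m, Matrix.vecMulVec (x s) (x s) with hSig
  have hPD : ∀ m, (Sig m).PosDef := by
    intro m
    apply (mySmulOnePosDef heps).add_posSemidef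
    apply Finset.sum_induction _ _ (fun a b ha hb => ha.add hb) Matrix.PosSemidef.zero
    exact fun s _ => myVecMulVecPosSemidef (x s)
  set q : ℕ → ℝ := fun k => x k ⬝ᵥ ((Sig (k - 1))⁻¹ *ᵥ x k) with hqdef
  have hq0 : ∀ k, 0 ≤ q k := by
    intro k
    have := ((hPD (k - 1)).inv).posSemidef.dotProduct_mulVec_nonneg (x k)
    simpa using this
  -- determinant recursion
  have hrec : ∀ m : ℕ, (Sig (m + 1)).det = (Sig m).det * (1 + q (m + 1)) := by
    intro m
    have h1 : Sig (m + 1) = Sig m + Matrix.vecMulVec (x (m + 1)) (x (m + 1)) := by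
      simp only [hSig]
      rw [Finset.sum_Icc_succ_top (Nat.le_add_left 1 m)]
      exact (add_assoc _ _ _).symm
    have hdet : IsUnit (Sig m).det := isUnit_iff_ne_zero.2 (hPD m).det_pos.ne'
    rw [h1, Matrix.vecMulVec_eq Unit, Matrix.det_add_replicateCol_mul_replicateRow hdet]
    congr 1
    rw [Matrix.det_unique]
    simp only [Matrix.add_apply, Matrix.one_apply_eq]
    congr 1
    rw [← Matrix.replicateRow_vecMul, Matrix.replicateRow_mul_replicateCol_apply, ← Matrix.dotProduct_mulVec]
    simp only [hqdef, Nat.add_sub_cancel]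
  -- determinant product formula
  have hdetprod : ∀ m : ℕ, (Sig m).det = eps ^ d * ∏ k ∈ Icc 1 m, (1 + q k) := by
    intro m
    induction m with
    | zero =>
      simp only [hSig, Icc_self, show Icc 1 0 = (∅ : Finset ℕ) by rfl, Finset.sum_empty,
        Finset.prod_empty, add_zero, mul_one]
      rw [Matrix.det_smul, Matrix.det_one, mul_one]
      simp
    | succ m ih =>
      rw [hrec m, ih, Finset.prod_Icc_succ_top (Nat.le_add_left 1 m), mul_assoc]
  -- trace bound
  have htrace : (Sig K).trace ≤ d * eps + K * BX ^ 2 := by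
    simp only [hSig, Matrix.trace_add, Matrix.trace_smul, Matrix.trace_one, Matrix.trace_sum]
    have h1 : ∀ s ∈ Icc 1 K, (Matrix.vecMulVec (x s) (x s)).trace ≤ BX ^ 2 := by
      intro s hs
      rw [myTraceVecMulVec]
      exact hx s hs
    have h2 := Finset.sum_le_sum h1
    rw [Finset.sum_const, Nat.card_Icc] at h2
    simp only [Fintype.card_fin, smul_eq_mul, nsmul_eq_mul] at *
    have : ((K + 1 - 1 : ℕ) : ℝ) = K := by simp
    rw [this] at h2
    linarith
  -- potential bound
  have hq1pos : ∀ k : ℕ, (0:ℝ) < 1 + q k := fun k => by linarith [hq0 k]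
  have htr0 : 0 ≤ (Sig K).trace := by
    rw [myTraceEqSumEig (hPD K).isHermitian]
    exact Finset.sum_nonneg fun i _ => ((hPD K).eigenvalues_pos i).le
  have hd0 : (0:ℝ) < (d:ℝ) := by exact_mod_cast hd
  have hdetK : (Sig K).det ≤ (eps + K * BX ^ 2 / d) ^ d := by
    refine le_trans (myDetLeTrace (hPD K) hd) ?_
    apply pow_le_pow_left₀ (div_nonneg htr0 hd0.le)
    rw [div_le_iff₀ hd0]
    have : (eps + (K:ℝ) * BX ^ 2 / d) * d = d * eps + K * BX ^ 2 := by field_simp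
    rw [this]
    exact htrace
  have hargpos : (0:ℝ) < eps + K * BX ^ 2 / d := by positivity
  have hlogsum : ∑ k ∈ Icc 1 K, Real.log (1 + q k) ≤ dt := by
    have hlogdet : Real.log ((Sig K).det)
        = d * Real.log eps + ∑ k ∈ Icc 1 K, Real.log (1 + q k) := by
      rw [hdetprod K, Real.log_mul (pow_ne_zero _ heps.ne')
        (Finset.prod_pos fun k _ => hq1pos k).ne', Real.log_pow,
        Real.log_prod fun k _ => (hq1pos k).ne']
    have hub : Real.log ((Sig K).det) ≤ d * Real.log (eps + K * BX ^ 2 / d) := by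
      have := Real.log_le_log (hPD K).det_pos hdetK
      rwa [Real.log_pow] at this
    have hlogdiv : Real.log (eps + K * BX ^ 2 / d) - Real.log eps
        = Real.log (1 + K * BX ^ 2 / (d * eps)) := by
      rw [← Real.log_div hargpos.ne' heps.ne']
      congr 1
      field_simp
    rw [hdt, ← hlogdiv]
    have : (d:ℝ) * Real.log eps + ∑ k ∈ Icc 1 K, Real.log (1 + q k)
        ≤ d * Real.log (eps + K * BX ^ 2 / d) := hlogdet ▸ hub
    nlinarith [this]
  have hpot : ∑ k ∈ Icc 1 K, min 1 (q k) ≤ 2 * dt := by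
    calc ∑ k ∈ Icc 1 K, min 1 (q k) ≤ ∑ k ∈ Icc 1 K, 2 * Real.log (1 + q k) :=
          Finset.sum_le_sum fun k _ => myLogLb (hq0 k)
      _ = 2 * ∑ k ∈ Icc 1 K, Real.log (1 + q k) := by rw [Finset.mul_sum]
      _ ≤ 2 * dt := by linarith
  -- per-k bound
  have hper : ∀ k ∈ Icc 1 K, min 1 |w k ⬝ᵥ x k| ≤
      (if 1 ≤ q k then (1:ℝ) else 0) + BW * Real.sqrt eps
      + η * (∑ s ∈ Icc 1 (k - 1), L k s) + min 1 (q k) / (4 * η) := by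
    intro k hk
    have hLk0 : 0 ≤ ∑ s ∈ Icc 1 (k - 1), L k s :=
      Finset.sum_nonneg fun s hs => le_trans (sq_nonneg _) (hL k hk s hs)
    have hsqeps : (0:ℝ) ≤ BW * Real.sqrt eps := by positivity
    have hmq : (0:ℝ) ≤ min 1 (q k) := le_min zero_le_one (hq0 k)
    have h4η : (0:ℝ) < 4 * η := by linarith
    rcases le_or_gt 1 (q k) with hcase | hcase
    · rw [if_pos hcase]
      have h1 : min 1 |w k ⬝ᵥ x k| ≤ 1 := min_le_left _ _
      have h2 : 0 ≤ η * ∑ s ∈ Icc 1 (k - 1), L k s := mul_nonneg hη.le hLk0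
      have h3 : 0 ≤ min 1 (q k) / (4 * η) := div_nonneg hmq h4η.le
      linarith
    · rw [if_neg (not_le.2 hcase)]
      have hqlt : min 1 (q k) = q k := min_eq_right hcase.le
      set b2 := w k ⬝ᵥ (Sig (k - 1) *ᵥ w k) with hb2def
      set Lk := ∑ s ∈ Icc 1 (k - 1), L k s with hLkdef
      have hb2 : b2 ≤ eps * BW ^ 2 + Lk := by
        have hexp : b2 = eps * (w k ⬝ᵥ w k) + ∑ s ∈ Icc 1 (k - 1), (x s ⬝ᵥ w k) ^ 2 := by
          simp only [hb2def, hSig]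
          rw [Matrix.add_mulVec, Matrix.smul_mulVec, Matrix.one_mulVec, mySumMulVec,
            dotProduct_add, myDotSum]
          congr 1
          · rw [dotProduct_smul]; rfl
          · exact Finset.sum_congr rfl fun s _ => myDotVecMulVec _ _
        rw [hexp]
        have h1 : eps * (w k ⬝ᵥ w k) ≤ eps * BW ^ 2 :=
          mul_le_mul_of_nonneg_left (hw k hk) heps.le
        have h2 : ∑ s ∈ Icc 1 (k - 1), (x s ⬝ᵥ w k) ^ 2 ≤ Lk := by
          refine Finset.sum_le_sum fun s hs => ?_
          rw [dotProduct_comm]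
          exact hL k hk s hs
        linarith
      have hb20 : 0 ≤ b2 := by simpa using (hPD (k - 1)).posSemidef.dotProduct_mulVec_nonneg (w k)
      have hcs : (w k ⬝ᵥ x k) ^ 2 ≤ b2 * q k := myCS (hPD (k - 1)) (w k) (x k)
      have habs : |w k ⬝ᵥ x k| ≤ Real.sqrt b2 * Real.sqrt (q k) := by
        rw [← Real.sqrt_sq_eq_abs, ← Real.sqrt_mul hb20]
        exact Real.sqrt_le_sqrt hcs
      have h2 : Real.sqrt b2 ≤ BW * Real.sqrt eps + Real.sqrt Lk := by
        calc Real.sqrt b2 ≤ Real.sqrt (eps * BW ^ 2 + Lk) := Real.sqrt_le_sqrt hb2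
          _ ≤ Real.sqrt (eps * BW ^ 2) + Real.sqrt Lk := mySqrtAdd (by positivity) hLk0
          _ = BW * Real.sqrt eps + Real.sqrt Lk := by
              rw [Real.sqrt_mul heps.le, Real.sqrt_sq hBW.le]; ring
      have hsq1 : Real.sqrt (q k) ≤ 1 := Real.sqrt_le_one.2 hcase.le
      have hamgm : Real.sqrt Lk * Real.sqrt (q k) ≤ η * Lk + q k / (4 * η) :=
        myAmGm hLk0 (hq0 k) hη
      have hfin : |w k ⬝ᵥ x k| ≤ BW * Real.sqrt eps + η * Lk + q k / (4 * η) := by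
        calc |w k ⬝ᵥ x k| ≤ Real.sqrt b2 * Real.sqrt (q k) := habs
          _ ≤ (BW * Real.sqrt eps + Real.sqrt Lk) * Real.sqrt (q k) :=
              mul_le_mul_of_nonneg_right h2 (Real.sqrt_nonneg _)
          _ = BW * Real.sqrt eps * Real.sqrt (q k) + Real.sqrt Lk * Real.sqrt (q k) := by ring
          _ ≤ BW * Real.sqrt eps * 1 + (η * Lk + q k / (4 * η)) :=
              add_le_add (mul_le_mul_of_nonneg_left hsq1 hsqeps) hamgm
          _ = BW * Real.sqrt eps + η * Lk + q k / (4 * η) := by ring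
      have := min_le_right (1:ℝ) |w k ⬝ᵥ x k|
      rw [hqlt]
      linarith
  -- summation
  have hsum := Finset.sum_le_sum hper
  have hcardIcc : (Icc 1 K).card = K := by rw [Nat.card_Icc]; omega
  have hsplit : ∑ k ∈ Icc 1 K, ((if 1 ≤ q k then (1:ℝ) else 0) + BW * Real.sqrt eps
      + η * (∑ s ∈ Icc 1 (k - 1), L k s) + min 1 (q k) / (4 * η))
      = (∑ k ∈ Icc 1 K, if 1 ≤ q k then (1:ℝ) else 0) + K * (BW * Real.sqrt eps)
      + η * (∑ k ∈ Icc 1 K, ∑ s ∈ Icc 1 (k - 1), L k s)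
      + (∑ k ∈ Icc 1 K, min 1 (q k)) / (4 * η) := by
    rw [Finset.sum_add_distrib, Finset.sum_add_distrib, Finset.sum_add_distrib,
      Finset.sum_const, ← Finset.mul_sum, ← Finset.sum_div, hcardIcc, nsmul_eq_mul]
  have hind : ∑ k ∈ Icc 1 K, (if 1 ≤ q k then (1:ℝ) else 0) ≤ min (K:ℝ) (2 * dt) := by
    refine le_min ?_ ?_
    · calc ∑ k ∈ Icc 1 K, (if 1 ≤ q k then (1:ℝ) else 0)
          ≤ ∑ k ∈ Icc 1 K, (1:ℝ) := Finset.sum_le_sum fun k _ => by split <;> norm_num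
        _ = K := by rw [Finset.sum_const, hcardIcc, nsmul_eq_mul, mul_one]
    · refine le_trans (Finset.sum_le_sum fun k _ => ?_) hpot
      split
      · next h => rw [min_eq_left h]
      · next h => exact le_min zero_le_one (hq0 k)
  have hdiv : (∑ k ∈ Icc 1 K, min 1 (q k)) / (4 * η) ≤ dt / (2 * η) := by
    have h1 : (∑ k ∈ Icc 1 K, min 1 (q k)) / (4 * η) ≤ (2 * dt) / (4 * η) := by
      gcongr

    have h2 : (2 * dt) / (4 * η) = dt / (2 * η) := by
      field_simp
      ring
    linarith
  calc ∑ k ∈ Icc 1 K, min 1 |w k ⬝ᵥ x k|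
      ≤ (∑ k ∈ Icc 1 K, if 1 ≤ q k then (1:ℝ) else 0) + K * (BW * Real.sqrt eps)
        + η * (∑ k ∈ Icc 1 K, ∑ s ∈ Icc 1 (k - 1), L k s)
        + (∑ k ∈ Icc 1 K, min 1 (q k)) / (4 * η) := by rw [← hsplit]; exact hsum
    _ ≤ η * (∑ k ∈ Icc 1 K, ∑ s ∈ Icc 1 (k - 1), L k s) + dt / (2 * η)
        + min (K:ℝ) (2 * dt) + K * BW * Real.sqrt eps := by
        have : (K:ℝ) * (BW * Real.sqrt eps) = K * BW * Real.sqrt eps := by ring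
        linarith [hind, hdiv]

open scoped RealInnerProductSpace

/-- Bilinear decoupling argument of Proposition B.1 of the paper. -/
theorem stmt4 (d K H : ℕ) (hd : 0 < d) (hK : 0 < K) (hH : 0 < H)
    (BW BX eps η : ℝ) (hBW : 0 < BW) (hBX : 0 < BX) (heps : 0 < eps) (hη : 0 < η)
    (w x : ℕ → ℕ → EuclideanSpace ℝ (Fin d))
    (hw : ∀ h ∈ Icc 1 H, ∀ k ∈ Icc 1 K, ‖w h k‖ ≤ BW)
    (hx : ∀ h ∈ Icc 1 H, ∀ k ∈ Icc 1 K, ‖x h k‖ ≤ BX)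
    (ℓ : ℕ → ℕ → ℕ → ℝ)
    (hℓ : ∀ k ∈ Icc 1 K, ∀ h ∈ Icc 1 H, ∀ s ∈ Icc 1 (k - 1),
      ⟪w h k, x h s⟫ ^ 2 ≤ ℓ k h s)
    (dt : ℝ) (hdt : dt = d * Real.log (1 + K * BX ^ 2 / (d * eps))) :
    ∑ k ∈ Icc 1 K, ∑ h ∈ Icc 1 H, min 1 |⟪w h k, x h k⟫| ≤
      η * ∑ k ∈ Icc 1 K, ∑ h ∈ Icc 1 H, ∑ s ∈ Icc 1 (k - 1), ℓ k h s
      + H * dt / (2 * η) + H * min (K : ℝ) (2 * dt)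
      + H * K * BW * Real.sqrt eps := by
  have hdot : ∀ a b : EuclideanSpace ℝ (Fin d),
      ⟪a, b⟫ = (fun i => a i) ⬝ᵥ (fun i => b i) := by
    intro a b
    simp [PiLp.inner_apply, dotProduct, RCLike.inner_apply]
    exact Finset.sum_congr rfl fun _ _ => mul_comm _ _
  have hmain : ∀ h ∈ Icc 1 H, ∑ k ∈ Icc 1 K, min 1 |⟪w h k, x h k⟫| ≤
      η * ∑ k ∈ Icc 1 K, ∑ s ∈ Icc 1 (k - 1), ℓ k h s
      + dt / (2 * η) + min (K : ℝ) (2 * dt) + K * BW * Real.sqrt eps := by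
    intro h hh
    have hw' : ∀ k ∈ Icc 1 K, (fun i => w h k i) ⬝ᵥ (fun i => w h k i) ≤ BW ^ 2 := by
      intro k hk
      have h1 : ⟪w h k, w h k⟫ = ‖w h k‖ ^ 2 := real_inner_self_eq_norm_sq _
      rw [hdot] at h1
      rw [h1]
      exact pow_le_pow_left₀ (norm_nonneg _) (hw h hh k hk) 2
    have hx' : ∀ k ∈ Icc 1 K, (fun i => x h k i) ⬝ᵥ (fun i => x h k i) ≤ BX ^ 2 := by
      intro k hk
      have h1 : ⟪x h k, x h k⟫ = ‖x h k‖ ^ 2 := real_inner_self_eq_norm_sq _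
      rw [hdot] at h1
      rw [h1]
      exact pow_le_pow_left₀ (norm_nonneg _) (hx h hh k hk) 2
    have hL' : ∀ k ∈ Icc 1 K, ∀ s ∈ Icc 1 (k - 1),
        ((fun i => w h k i) ⬝ᵥ (fun i => x h s i)) ^ 2 ≤ ℓ k h s := by
      intro k hk s hs
      rw [← hdot]
      exact hℓ k hk h hh s hs
    have key := myKey d K hd hK BW BX eps η hBW hBX heps hη
      (fun k i => w h k i) (fun k i => x h k i) hw' hx' (fun k s => ℓ k h s) hL' dt hdt
    simp only at key
    calc ∑ k ∈ Icc 1 K, min 1 |⟪w h k, x h k⟫|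
        = ∑ k ∈ Icc 1 K, min 1 |(fun i => w h k i) ⬝ᵥ (fun i => x h k i)| := by
          refine Finset.sum_congr rfl fun k _ => ?_
          rw [hdot]
      _ ≤ _ := key
  calc ∑ k ∈ Icc 1 K, ∑ h ∈ Icc 1 H, min 1 |⟪w h k, x h k⟫|
      = ∑ h ∈ Icc 1 H, ∑ k ∈ Icc 1 K, min 1 |⟪w h k, x h k⟫| := Finset.sum_comm
    _ ≤ ∑ h ∈ Icc 1 H, (η * ∑ k ∈ Icc 1 K, ∑ s ∈ Icc 1 (k - 1), ℓ k h s
        + dt / (2 * η) + min (K : ℝ) (2 * dt) + K * BW * Real.sqrt eps) :=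
        Finset.sum_le_sum hmain
    _ = η * ∑ h ∈ Icc 1 H, ∑ k ∈ Icc 1 K, ∑ s ∈ Icc 1 (k - 1), ℓ k h s
        + H * (dt / (2 * η)) + H * min (K : ℝ) (2 * dt)
        + H * (K * BW * Real.sqrt eps) := by
        rw [Finset.sum_add_distrib, Finset.sum_add_distrib, Finset.sum_add_distrib,
          Finset.sum_const, Finset.sum_const, Finset.sum_const, ← Finset.mul_sum,
          Nat.card_Icc]
        simp only [nsmul_eq_mul]
        norm_num
    _ = η * ∑ k ∈ Icc 1 K, ∑ h ∈ Icc 1 H, ∑ s ∈ Icc 1 (k - 1), ℓ k h s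
        + H * dt / (2 * η) + H * min (K : ℝ) (2 * dt)
        + H * K * BW * Real.sqrt eps := by
        rw [Finset.sum_comm (s := Icc 1 H) (t := Icc 1 K)]
        ring
end

section
/- Let d and K be positive integers, let Lambda_0 be a positive definite real d x d matrix, and let x_1, ..., x_K be vectors in R^d. Define Lambda_k = Lambda_0 + sum_{s=1}^k x_s x_s^T for k in {0,1,...,K}. Then sum_{s=1}^K min{1, x_s^T Lambda_{s-1}^{-1} x_s} <= 2 * log( det(Lambda_K) / det(Lambda_0) ). -/
open Finset Matrix

private lemma min_le_two_log (u : ℝ) (hu : 0 ≤ u) : min 1 u ≤ 2 * Real.log (1 + u) := by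
  have h1u : (0:ℝ) < 1 + u := by linarith
  have hlog : u / (1 + u) ≤ Real.log (1 + u) := by
    have h := Real.log_le_sub_one_of_pos (show (0:ℝ) < 1/(1+u) by positivity)
    rw [Real.log_div one_ne_zero (ne_of_gt h1u), Real.log_one] at h
    have : -(Real.log (1+u)) ≤ 1/(1+u) - 1 := by linarith
    have h2 : (1:ℝ)/(1+u) - 1 = -(u/(1+u)) := by field_simp; ring
    rw [h2] at this
    linarith
  have hmin : min 1 u ≤ 2 * (u / (1 + u)) := by
    rw [← mul_div_assoc, le_div_iff₀ h1u]
    rcases le_total u 1 with h | h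
    · rw [min_eq_right h]; nlinarith
    · rw [min_eq_left h]; nlinarith
  linarith

/-- Elliptical potential lemma (Lemma C.3 of the paper). -/
theorem stmt5 (d K : ℕ) (hd : 0 < d) (hK : 0 < K)
    (Λ₀ : Matrix (Fin d) (Fin d) ℝ) (hΛ₀ : Λ₀.PosDef)
    (x : ℕ → Fin d → ℝ)
    (Λ : ℕ → Matrix (Fin d) (Fin d) ℝ)
    (hΛ : ∀ k, Λ k = Λ₀ + ∑ s ∈ Icc 1 k, vecMulVec (x s) (x s)) :
    ∑ s ∈ Icc 1 K, min 1 (x s ⬝ᵥ (Λ (s - 1))⁻¹ *ᵥ x s) ≤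
      2 * Real.log ((Λ K).det / Λ₀.det) := by
  classical
  -- each rank-one term is positive semidefinite
  have hPSD : ∀ s : ℕ, (vecMulVec (x s) (x s)).PosSemidef := by
    intro s
    refine posSemidef_iff_dotProduct_mulVec.mpr ⟨?_, ?_⟩
    · ext i j
      simp [vecMulVec, conjTranspose_apply, mul_comm]
    · intro y
      have : star y ⬝ᵥ (vecMulVec (x s) (x s)) *ᵥ y = (x s ⬝ᵥ y) * (x s ⬝ᵥ y) := by
        simp only [star_trivial, dotProduct, mulVec, vecMulVec, of_apply,
          Finset.mul_sum, Finset.sum_mul]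
        rw [Finset.sum_comm]
        apply Finset.sum_congr rfl; intro i _
        apply Finset.sum_congr rfl; intro j _
        ring
      rw [this]
      exact mul_self_nonneg _
  -- each Λ k is positive definite
  have hpos : ∀ k, (Λ k).PosDef := by
    intro k
    rw [hΛ k]
    refine hΛ₀.add_posSemidef ?_
    exact Finset.sum_induction _ Matrix.PosSemidef (fun a b ha hb => ha.add hb)
      (Matrix.PosSemidef.zero) (fun i _ => hPSD i)
  -- quadratic forms are nonnegative
  have hquad : ∀ s : ℕ, 0 ≤ x s ⬝ᵥ (Λ (s-1))⁻¹ *ᵥ x s := by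
    intro s
    have h := (posSemidef_iff_dotProduct_mulVec.mp (hpos (s-1)).inv.posSemidef).2 (x s)
    simpa using h
  -- determinant recursion
  have hdet : ∀ t : ℕ, (Λ (t+1)).det
      = (Λ t).det * (1 + x (t+1) ⬝ᵥ (Λ t)⁻¹ *ᵥ x (t+1)) := by
    intro t
    have hunit : IsUnit (Λ t).det := (hpos t).det_pos.ne'.isUnit
    have hinv : Λ t * (Λ t)⁻¹ = 1 := mul_nonsing_inv _ hunit
    have h1 : Λ (t+1) = Λ t + vecMulVec (x (t+1)) (x (t+1)) := by
      rw [hΛ (t+1), hΛ t, Finset.sum_Icc_succ_top (Nat.le_add_left 1 t), ← add_assoc]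
    have hstep : Λ t * (1 + replicateCol (Fin 1) ((Λ t)⁻¹ *ᵥ x (t+1)) * replicateRow (Fin 1) (x (t+1)))
        = Λ (t+1) := by
      rw [mul_add, mul_one, ← Matrix.mul_assoc, ← replicateCol_mulVec, mulVec_mulVec, hinv,
        one_mulVec, h1, vecMulVec_eq (Fin 1)]
      rfl
    rw [← hstep, det_mul]
    exact congrArg _ (det_one_add_replicateCol_mul_replicateRow _ _)
  -- log of each step
  have hlogstep : ∀ t : ℕ,
      2 * Real.log (1 + x (t+1) ⬝ᵥ (Λ t)⁻¹ *ᵥ x (t+1))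
        = 2 * Real.log ((Λ (t+1)).det) - 2 * Real.log ((Λ t).det) := by
    intro t
    rw [hdet t, Real.log_mul (hpos t).det_pos.ne'
      (by have := hquad (t+1); simp only [Nat.add_sub_cancel] at this; linarith)]
    ring
  -- bound each summand and telescope
  have hsum : ∑ s ∈ Icc 1 K, min 1 (x s ⬝ᵥ (Λ (s - 1))⁻¹ *ᵥ x s)
      ≤ ∑ s ∈ Icc 1 K, (2 * Real.log ((Λ s).det) - 2 * Real.log ((Λ (s-1)).det)) := by
    apply Finset.sum_le_sum
    intro s hs
    have hs1 : 1 ≤ s := (Finset.mem_Icc.mp hs).1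
    obtain ⟨t, rfl⟩ := Nat.exists_eq_add_of_le hs1
    simp only [Nat.add_sub_cancel_left, Nat.add_sub_cancel] at *
    rw [add_comm 1 t] at *
    calc min 1 (x (t+1) ⬝ᵥ (Λ t)⁻¹ *ᵥ x (t+1))
        ≤ 2 * Real.log (1 + x (t+1) ⬝ᵥ (Λ t)⁻¹ *ᵥ x (t+1)) := by
          apply min_le_two_log
          have := hquad (t+1)
          simpa using this
      _ = 2 * Real.log ((Λ (t+1)).det) - 2 * Real.log ((Λ t).det) := hlogstep t
  -- telescoping
  have htel : ∑ s ∈ Icc 1 K, (2 * Real.log ((Λ s).det) - 2 * Real.log ((Λ (s-1)).det))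
      = 2 * Real.log ((Λ K).det) - 2 * Real.log ((Λ 0).det) := by
    rw [← Finset.Ico_add_one_right_eq_Icc, Finset.sum_Ico_eq_sum_range]
    simp only [Nat.add_sub_cancel, Nat.succ_sub_one]
    have : ∀ i, 2 * Real.log ((Λ (1+i)).det) - 2 * Real.log ((Λ (1+i-1)).det)
        = (fun n => 2 * Real.log ((Λ n).det)) (i+1)
          - (fun n => 2 * Real.log ((Λ n).det)) i := by
      intro i
      simp [add_comm 1 i]
    rw [Finset.sum_congr rfl (fun i _ => this i)]
    exact Finset.sum_range_sub (fun n => 2 * Real.log ((Λ n).det)) K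
  have hΛ0 : Λ 0 = Λ₀ := by rw [hΛ 0]; simp
  rw [htel, hΛ0] at hsum
  rw [Real.log_div (hpos K).det_pos.ne' hΛ₀.det_pos.ne']
  linarith
end

section
/- Let (Omega, F, P) be a probability space equipped with a filtration (F_t) for t in {0, 1, ..., T}, and let X_1, ..., X_T be real-valued random variables such that each X_t is F_t-measurable and exp(-X_t) is integrable. Then for any delta in (0,1), with probability at least 1 - delta the following holds simultaneously for all t in {1, ..., T}: - sum_{s=1}^t X_s <= sum_{s=1}^t log E[ exp(-X_s) | F_{s-1} ] + log(1/delta), where E[ . | F_{s-1} ] denotes conditional expectation given F_{s-1}. -/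
open MeasureTheory Finset
open scoped ENNReal

lemma tower_lintegral {Ω : Type*} {m m0 : MeasurableSpace Ω} (hm : m ≤ m0)
    (μ : Measure Ω) [IsFiniteMeasure μ]
    {h : Ω → ℝ} (hh : Integrable h μ) (hh0 : ∀ ω, 0 ≤ h ω) (hmh : Measurable h)
    {g : Ω → ℝ≥0∞} (hg : Measurable[m] g) :
    ∫⁻ ω, g ω * ENNReal.ofReal (h ω) ∂μ
      = ∫⁻ ω, g ω * ENNReal.ofReal ((μ[h|m]) ω) ∂μ := by
  have hch : Integrable (μ[h|m]) μ := integrable_condExp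
  have hc0 : 0 ≤ᵐ[μ] μ[h|m] := condExp_nonneg (Filter.Eventually.of_forall hh0)
  have hmc : Measurable (μ[h|m]) := stronglyMeasurable_condExp.measurable.mono hm le_rfl
  have m1 : Measurable fun ω => ENNReal.ofReal (h ω) := ENNReal.measurable_ofReal.comp hmh
  have m2 : Measurable fun ω => ENNReal.ofReal ((μ[h|m]) ω) := ENNReal.measurable_ofReal.comp hmc
  have mg : Measurable g := hg.mono hm le_rfl
  set ν₁ := μ.withDensity (fun ω => ENNReal.ofReal (h ω)) with hν₁
  set ν₂ := μ.withDensity (fun ω => ENNReal.ofReal ((μ[h|m]) ω)) with hν₂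
  have key : ν₁.trim hm = ν₂.trim hm := by
    refine @Measure.ext Ω m _ _ (fun s hs => ?_)
    rw [trim_measurableSet_eq hm hs, trim_measurableSet_eq hm hs, hν₁, hν₂,
      withDensity_apply _ (hm s hs), withDensity_apply _ (hm s hs),
      ← ofReal_integral_eq_lintegral_ofReal hh.restrict
        (ae_restrict_of_ae (Filter.Eventually.of_forall hh0)),
      ← ofReal_integral_eq_lintegral_ofReal hch.restrict (ae_restrict_of_ae hc0),
      setIntegral_condExp hm hh hs]
  calc ∫⁻ ω, g ω * ENNReal.ofReal (h ω) ∂μ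
      = ∫⁻ ω, ((fun ω => ENNReal.ofReal (h ω)) * g) ω ∂μ := by
        simp only [Pi.mul_apply, mul_comm]
    _ = ∫⁻ ω, g ω ∂ν₁ := (lintegral_withDensity_eq_lintegral_mul μ m1 mg).symm
    _ = ∫⁻ ω, g ω ∂(ν₁.trim hm) := (lintegral_trim hm hg).symm
    _ = ∫⁻ ω, g ω ∂(ν₂.trim hm) := by rw [key]
    _ = ∫⁻ ω, g ω ∂ν₂ := lintegral_trim hm hg
    _ = ∫⁻ ω, ((fun ω => ENNReal.ofReal ((μ[h|m]) ω)) * g) ω ∂μ :=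
        lintegral_withDensity_eq_lintegral_mul μ m2 mg
    _ = _ := by simp only [Pi.mul_apply, mul_comm]

/-- Martingale exponential inequality (Lemma C.1 of the paper). -/
theorem stmt11 {Ω : Type*} {m0 : MeasurableSpace Ω} (μ : Measure Ω)
    [IsProbabilityMeasure μ]
    (T : ℕ) (ℱ : Filtration ℕ m0) (X : ℕ → Ω → ℝ)
    (hmeas : ∀ t ∈ Icc 1 T, Measurable[ℱ t] (X t))
    (hint : ∀ t ∈ Icc 1 T, Integrable (fun ω => Real.exp (-X t ω)) μ)
    (δ : ℝ) (hδ : δ ∈ Set.Ioo (0 : ℝ) 1) :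
    ENNReal.ofReal (1 - δ) ≤
      μ {ω | ∀ t ∈ Icc 1 T,
        -∑ s ∈ Icc 1 t, X s ω ≤
          (∑ s ∈ Icc 1 t,
            Real.log ((μ[fun ω' => Real.exp (-X s ω') | ℱ (s - 1)]) ω))
          + Real.log (1 / δ)} := by
  obtain ⟨hδ0, hδ1⟩ := hδ
  have hδ' : (0:ℝ) < 1/δ := by positivity
  set E : ℕ → Ω → ℝ := fun s => μ[fun ω' => Real.exp (-X s ω') | ℱ (s - 1)] with hE
  set M : ℕ → Ω → ℝ := fun t ω => Real.exp (∑ s ∈ Icc 1 t, (-X s ω - Real.log (E s ω))) with hM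
  have hMpos : ∀ t ω, 0 < M t ω := fun t ω => Real.exp_pos _
  have hIccins : ∀ t : ℕ, Icc 1 (t+1) = insert (t+1) (Icc 1 t) :=
    fun t => (Finset.insert_Icc_right_eq_Icc_add_one (Nat.succ_le_succ (Nat.zero_le t))).symm
  -- measurability of M t w.r.t. ℱ t, for t ≤ T
  have hMmeas : ∀ t, t ≤ T → Measurable[ℱ t] (M t) := by
    intro t htT
    apply Real.measurable_exp.comp
    apply Finset.measurable_sum
    intro s hs
    obtain ⟨hs1, hs2⟩ := mem_Icc.1 hs
    have hsT : s ∈ Icc 1 T := mem_Icc.2 ⟨hs1, hs2.trans htT⟩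
    have h1 : Measurable[ℱ t] (X s) := (hmeas s hsT).mono (ℱ.mono hs2) le_rfl
    have h2 : Measurable[ℱ t] (E s) :=
      (stronglyMeasurable_condExp.measurable :
        Measurable[ℱ (s-1)] (E s)).mono (ℱ.mono ((Nat.sub_le s 1).trans hs2)) le_rfl
    exact h1.neg.sub (Real.measurable_log.comp h2)
  have hMmeas0 : ∀ t, t ≤ T → Measurable (M t) :=
    fun t ht => (hMmeas t ht).mono (ℱ.le t) le_rfl
  -- the good sets
  set G : ℕ → Set Ω := fun t => {ω | ∀ s ∈ Icc 1 t, M s ω < 1/δ} with hG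
  have hGmeas : ∀ t, t ≤ T → MeasurableSet[ℱ t] (G t) := by
    intro t ht
    have : G t = ⋂ s ∈ Icc 1 t, {ω | M s ω < 1/δ} := by
      ext ω; simp [hG]
    rw [this]
    refine MeasurableSet.biInter (Finset.countable_toSet _) (fun s hs => ?_)
    obtain ⟨hs1, hs2⟩ := mem_Icc.1 (mem_coe.1 hs)
    have : Measurable[ℱ t] (M s) :=
      (hMmeas s (hs2.trans ht)).mono (ℱ.mono hs2) le_rfl
    exact measurableSet_lt this measurable_const
  have hGmeas0 : ∀ t, t ≤ T → MeasurableSet (G t) := fun t ht => ℱ.le t _ (hGmeas t ht)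
  -- key supermartingale step
  have key : ∀ t, t + 1 ≤ T →
      ∫⁻ ω in G t, ENNReal.ofReal (M (t+1) ω) ∂μ
        ≤ ∫⁻ ω in G t, ENNReal.ofReal (M t ω) ∂μ := by
    intro t ht
    have ht1 : t + 1 ∈ Icc 1 T := mem_Icc.2 ⟨Nat.succ_le_succ (Nat.zero_le t), ht⟩
    have hXmeas : Measurable (fun ω => Real.exp (-X (t+1) ω)) :=
      (Real.measurable_exp.comp ((hmeas _ ht1).mono (ℱ.le _) le_rfl).neg)
    have hEt : E (t+1) = μ[(fun ω => Real.exp (-X (t+1) ω)) | ℱ t] := by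
      simp [hE]
    -- decompose M (t+1)
    have hsplit : ∀ ω, M (t+1) ω
        = (M t ω * Real.exp (-Real.log (E (t+1) ω))) * Real.exp (-X (t+1) ω) := by
      intro ω
      rw [hM]
      simp only []
      rw [hIccins t, Finset.sum_insert (by simp), Real.exp_add,
        sub_eq_add_neg, Real.exp_add]
      ring
    set g : Ω → ℝ≥0∞ :=
      (G t).indicator (fun ω => ENNReal.ofReal (M t ω * Real.exp (-Real.log (E (t+1) ω))))
      with hg
    have hgmeas : Measurable[ℱ t] g := by
      refine Measurable.indicator ?_ (hGmeas t (Nat.le_of_succ_le ht))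
      refine ENNReal.measurable_ofReal.comp ?_
      have h2 : Measurable[ℱ t] (E (t+1)) := by
        rw [hEt]; exact stronglyMeasurable_condExp.measurable
      exact (hMmeas t (Nat.le_of_succ_le ht)).mul
        (Real.measurable_exp.comp (Real.measurable_log.comp h2).neg)
    have tower := tower_lintegral (ℱ.le t) μ (hint _ ht1)
      (fun ω => (Real.exp_pos _).le) hXmeas hgmeas
    rw [← hEt] at tower
    calc ∫⁻ ω in G t, ENNReal.ofReal (M (t+1) ω) ∂μ
        = ∫⁻ ω, g ω * ENNReal.ofReal (Real.exp (-X (t+1) ω)) ∂μ := by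
          rw [← lintegral_indicator (hGmeas0 t (Nat.le_of_succ_le ht))]
          congr 1; ext ω
          by_cases hω : ω ∈ G t
          · simp only [hg, Set.indicator_of_mem hω, hsplit ω]
            rw [ENNReal.ofReal_mul
              (by positivity : (0:ℝ) ≤ M t ω * Real.exp (-Real.log (E (t+1) ω)))]
          · simp [hg, Set.indicator_of_notMem hω]
      _ = ∫⁻ ω, g ω * ENNReal.ofReal (E (t+1) ω) ∂μ := tower
      _ ≤ ∫⁻ ω in G t, ENNReal.ofReal (M t ω) ∂μ := by
          rw [← lintegral_indicator (hGmeas0 t (Nat.le_of_succ_le ht))]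
          refine lintegral_mono fun ω => ?_
          by_cases hω : ω ∈ G t
          · simp only [hg, Set.indicator_of_mem hω]
            rcases le_or_gt (E (t+1) ω) 0 with ha | ha
            · simp [ENNReal.ofReal_eq_zero.2 ha]
            · rw [← ENNReal.ofReal_mul (by positivity), Real.exp_neg, Real.exp_log ha,
                mul_assoc, inv_mul_cancel₀ (ne_of_gt ha), mul_one]
          · simp [hg, Set.indicator_of_notMem hω]
  -- main induction
  have main : ∀ t, t ≤ T →
      ENNReal.ofReal (1/δ) * μ ((G t)ᶜ) + ∫⁻ ω in G t, ENNReal.ofReal (M t ω) ∂μ ≤ 1 := by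
    intro t
    induction t with
    | zero =>
      intro _
      have h1 : G 0 = Set.univ := by
        ext ω
        simp only [hG, Set.mem_setOf_eq, Set.mem_univ, iff_true]
        intro s hs
        simp at hs
      have h2 : ∀ ω, M 0 ω = 1 := by intro ω; simp [hM]
      simp only [h1, h2, Set.compl_univ, measure_empty, mul_zero, zero_add,
        Measure.restrict_univ, ENNReal.ofReal_one, lintegral_one, measure_univ, le_refl]
    | succ t ih =>
      intro ht
      have ht' : t ≤ T := Nat.le_of_succ_le ht
      set B : Set Ω := G t ∩ {ω | 1/δ ≤ M (t+1) ω} with hB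
      have hGsucc : G (t+1) = G t ∩ {ω | M (t+1) ω < 1/δ} := by
        ext ω
        simp only [hG, Set.mem_setOf_eq, Set.mem_inter_iff]
        constructor
        · intro h
          exact ⟨fun s hs => h s (by rw [hIccins t]; exact Finset.mem_insert_of_mem hs),
            h (t+1) (by rw [hIccins t]; exact Finset.mem_insert_self _ _)⟩
        · rintro ⟨h1, h2⟩ s hs
          rw [hIccins t, Finset.mem_insert] at hs
          rcases hs with rfl | hs
          · exact h2
          · exact h1 s hs
      have hMt1 : Measurable (M (t+1)) := hMmeas0 _ ht
      have hBmeas : MeasurableSet B :=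
        (hGmeas0 t ht').inter (measurableSet_le measurable_const hMt1)
      have hGsuccMeas : MeasurableSet (G (t+1)) := hGmeas0 _ ht
      have hdisj : Disjoint B (G (t+1)) := by
        rw [hGsucc]
        refine Set.disjoint_left.2 fun ω hω1 hω2 => ?_
        have h1 : 1/δ ≤ M (t+1) ω := hω1.2
        have h2 : M (t+1) ω < 1/δ := hω2.2
        exact absurd h2 (not_lt.2 h1)
      have hunion : G t = B ∪ G (t+1) := by
        rw [hGsucc, hB, ← Set.inter_union_distrib_left]
        ext ω
        simp only [Set.mem_inter_iff, Set.mem_union, Set.mem_setOf_eq]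
        exact ⟨fun h => ⟨h, (le_or_gt (1/δ) (M (t+1) ω))⟩, fun h => h.1⟩
      have hcompl : (G (t+1))ᶜ = (G t)ᶜ ∪ B := by
        ext ω
        simp only [hGsucc, hB, Set.mem_compl_iff, Set.mem_inter_iff, Set.mem_union,
          Set.mem_setOf_eq, not_and, not_lt]
        constructor
        · intro h
          by_cases h1 : ω ∈ G t
          · exact Or.inr ⟨h1, h h1⟩
          · exact Or.inl h1
        · rintro (h | h) h1
          · exact absurd h1 h
          · exact h.2
      have hmeascompl : μ ((G (t+1))ᶜ) = μ ((G t)ᶜ) + μ B := by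
        rw [hcompl]
        refine measure_union ?_ hBmeas
        exact Set.disjoint_left.2 fun ω hω1 hω2 => hω1 hω2.1
      have hBbound : ENNReal.ofReal (1/δ) * μ B ≤ ∫⁻ ω in B, ENNReal.ofReal (M (t+1) ω) ∂μ := by
        rw [← setLIntegral_const B (ENNReal.ofReal (1/δ))]
        refine setLIntegral_mono hMt1.ennreal_ofReal fun ω hω => ?_
        exact ENNReal.ofReal_le_ofReal hω.2
      have hsum : ∫⁻ ω in B, ENNReal.ofReal (M (t+1) ω) ∂μ
            + ∫⁻ ω in G (t+1), ENNReal.ofReal (M (t+1) ω) ∂μ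
          = ∫⁻ ω in G t, ENNReal.ofReal (M (t+1) ω) ∂μ := by
        rw [hunion, lintegral_union hGsuccMeas hdisj]
      calc ENNReal.ofReal (1/δ) * μ ((G (t+1))ᶜ)
            + ∫⁻ ω in G (t+1), ENNReal.ofReal (M (t+1) ω) ∂μ
          = ENNReal.ofReal (1/δ) * μ ((G t)ᶜ) + (ENNReal.ofReal (1/δ) * μ B
              + ∫⁻ ω in G (t+1), ENNReal.ofReal (M (t+1) ω) ∂μ) := by
            rw [hmeascompl, mul_add]; ring
        _ ≤ ENNReal.ofReal (1/δ) * μ ((G t)ᶜ) + (∫⁻ ω in B, ENNReal.ofReal (M (t+1) ω) ∂μ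
              + ∫⁻ ω in G (t+1), ENNReal.ofReal (M (t+1) ω) ∂μ) := by
            gcongr
        _ = ENNReal.ofReal (1/δ) * μ ((G t)ᶜ)
              + ∫⁻ ω in G t, ENNReal.ofReal (M (t+1) ω) ∂μ := by rw [hsum]
        _ ≤ ENNReal.ofReal (1/δ) * μ ((G t)ᶜ)
              + ∫⁻ ω in G t, ENNReal.ofReal (M t ω) ∂μ := by
            exact add_le_add_right (key t ht) _
        _ ≤ 1 := ih ht'
  -- conclude
  have hfinal : ENNReal.ofReal (1/δ) * μ ((G T)ᶜ) ≤ 1 :=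
    le_trans (le_add_right le_rfl) (main T le_rfl)
  have hμc : μ ((G T)ᶜ) ≤ ENNReal.ofReal δ := by
    have h1 : ENNReal.ofReal δ * ENNReal.ofReal (1/δ) = 1 := by
      rw [← ENNReal.ofReal_mul hδ0.le, mul_one_div_cancel (ne_of_gt hδ0), ENNReal.ofReal_one]
    calc μ ((G T)ᶜ) = ENNReal.ofReal δ * (ENNReal.ofReal (1/δ) * μ ((G T)ᶜ)) := by
          rw [← mul_assoc, h1, one_mul]
      _ ≤ ENNReal.ofReal δ * 1 := by gcongr
      _ = ENNReal.ofReal δ := mul_one _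
  have hGsub : G T ⊆ {ω | ∀ t ∈ Icc 1 T,
      -∑ s ∈ Icc 1 t, X s ω ≤
        (∑ s ∈ Icc 1 t, Real.log (E s ω)) + Real.log (1 / δ)} := by
    intro ω hω t htm
    have hlt : M t ω < 1/δ := hω t htm
    have : ∑ s ∈ Icc 1 t, (-X s ω - Real.log (E s ω)) ≤ Real.log (1/δ) := by
      have := (Real.exp_le_exp.1 (le_of_lt (by rwa [Real.exp_log hδ'] : M t ω < Real.exp (Real.log (1/δ)))))
      exact this
    rw [Finset.sum_sub_distrib, Finset.sum_neg_distrib] at this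
    linarith
  calc ENNReal.ofReal (1 - δ) = 1 - ENNReal.ofReal δ := by
        rw [ENNReal.ofReal_sub _ hδ0.le, ENNReal.ofReal_one]
    _ ≤ 1 - μ ((G T)ᶜ) := by
        exact tsub_le_tsub_left hμc 1
    _ = μ (G T) := by
        have h : μ ((G T)ᶜ)ᶜ = 1 - μ ((G T)ᶜ) :=
          prob_compl_eq_one_sub (hGmeas0 T le_rfl).compl
        rw [compl_compl] at h
        exact h.symm
    _ ≤ _ := measure_mono hGsub
end

section
/- Let (Omega, F, P) be a probability space equipped with a filtration (F_k) for k in {0, 1, ..., K}, let I be a finite nonempty index set, and for each i in I and k in {1, ..., K} let X_{i,k} be a real-valued random variable that is F_k-measurable with exp(-X_{i,k}/2) integrable, and let h_{i,k} be an F_{k-1}-measurable random variable taking values in [0,1] such that E[ exp(-X_{i,k}/2) | F_{k-1} ] <= 1 - h_{i,k} almost surely. Then for any delta in (0,1), with probability at least 1 - delta the following holds simultaneously for all i in I and all k in {1, ..., K}: - sum_{s=1}^k X_{i,s} <= - 2 * sum_{s=1}^k h_{i,s} + 2 * log(|I| / delta). -/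
open MeasureTheory Finset
open scoped ENNReal NNReal

lemma aux_mul_integrable {Ω : Type*} {m0 : MeasurableSpace Ω}
    (μ : Measure Ω) [IsProbabilityMeasure μ]
    {m : MeasurableSpace Ω} (hm : m ≤ m0)
    {h u : Ω → ℝ} (hhm : StronglyMeasurable[m] h) (hh0 : ∀ ω, 0 ≤ h ω)
    (hhint : Integrable h μ) (hu0 : ∀ ω, 0 ≤ u ω) (huint : Integrable u μ)
    (hbd : ∀ᵐ ω ∂μ, (μ[u|m]) ω ≤ 1) :
    Integrable (fun ω => h ω * u ω) μ := by
  have hasm : AEStronglyMeasurable[m0] (fun ω => h ω * u ω) μ :=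
    ((hhm.mono hm).aestronglyMeasurable.mul huint.aestronglyMeasurable)
  refine ⟨hasm, ?_⟩
  rw [hasFiniteIntegral_iff_ofReal
    (Filter.Eventually.of_forall fun ω => mul_nonneg (hh0 ω) (hu0 ω))]
  set hn : ℕ → Ω → ℝ := fun n ω => min (h ω) n with hhn
  have hn0 : ∀ n ω, 0 ≤ hn n ω := fun n ω => le_min (hh0 ω) (Nat.cast_nonneg n)
  have hnbd : ∀ n ω, ‖hn n ω‖ ≤ (n : ℝ) := fun n ω => by
    rw [Real.norm_eq_abs, abs_of_nonneg (hn0 n ω)]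
    exact min_le_right _ _
  have hnm : ∀ n, StronglyMeasurable[m] (hn n) :=
    fun n => (hhm.measurable.min measurable_const).stronglyMeasurable
  have hint1 : ∀ n, Integrable (fun ω => hn n ω * u ω) μ := fun n =>
    huint.bdd_mul (c := n) ((hnm n).mono hm).aestronglyMeasurable (Filter.Eventually.of_forall (hnbd n))
  have key : ∀ n : ℕ, ∫ ω, hn n ω * u ω ∂μ ≤ ∫ ω, h ω ∂μ := by
    intro n
    have heq : μ[fun ω => hn n ω * u ω|m] =ᵐ[μ] fun ω => hn n ω * (μ[u|m]) ω :=
      condExp_mul_of_stronglyMeasurable_left (hnm n) (hint1 n) huint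
    have hint2 : Integrable (fun ω => hn n ω * (μ[u|m]) ω) μ :=
      integrable_condExp.bdd_mul (c := n) ((hnm n).mono hm).aestronglyMeasurable (Filter.Eventually.of_forall (hnbd n))
    have hintn : Integrable (hn n) μ :=
      hhint.mono ((hnm n).mono hm).aestronglyMeasurable
        (Filter.Eventually.of_forall fun ω => by
          rw [Real.norm_eq_abs, Real.norm_eq_abs, abs_of_nonneg (hn0 n ω),
            abs_of_nonneg (hh0 ω)]
          exact min_le_left _ _)
    calc ∫ ω, hn n ω * u ω ∂μ
        = ∫ ω, (μ[fun ω => hn n ω * u ω|m]) ω ∂μ := (integral_condExp hm).symm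
      _ = ∫ ω, hn n ω * (μ[u|m]) ω ∂μ := integral_congr_ae heq
      _ ≤ ∫ ω, hn n ω ∂μ := by
          refine integral_mono_ae hint2 hintn ?_
          filter_upwards [hbd] with ω hω
          exact mul_le_of_le_one_right (hn0 n ω) hω
      _ ≤ ∫ ω, h ω ∂μ :=
          integral_mono hintn hhint fun ω => min_le_left _ _
  have hsup : ∀ ω, (⨆ n : ℕ, ENNReal.ofReal (hn n ω * u ω)) = ENNReal.ofReal (h ω * u ω) := by
    intro ω
    apply le_antisymm
    · exact iSup_le fun n => ENNReal.ofReal_le_ofReal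
        (mul_le_mul_of_nonneg_right (min_le_left _ _) (hu0 ω))
    · refine le_iSup_of_le ⌈h ω⌉₊ ?_
      rw [show hn ⌈h ω⌉₊ ω = h ω from min_eq_left (Nat.le_ceil _)]
  have hlim : ∫⁻ ω, ENNReal.ofReal (h ω * u ω) ∂μ
      = ⨆ n, ∫⁻ ω, ENNReal.ofReal (hn n ω * u ω) ∂μ := by
    calc ∫⁻ ω, ENNReal.ofReal (h ω * u ω) ∂μ
        = ∫⁻ ω, ⨆ n, ENNReal.ofReal (hn n ω * u ω) ∂μ := by simp_rw [hsup]
      _ = ⨆ n, ∫⁻ ω, ENNReal.ofReal (hn n ω * u ω) ∂μ := by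
          refine lintegral_iSup' (fun n => ENNReal.measurable_ofReal.comp_aemeasurable
              (hint1 n).aestronglyMeasurable.aemeasurable) ?_
          refine Filter.Eventually.of_forall fun ω a b hab => ENNReal.ofReal_le_ofReal ?_
          exact mul_le_mul_of_nonneg_right (min_le_min le_rfl (Nat.cast_le.mpr hab)) (hu0 ω)
  rw [hlim]
  refine lt_of_le_of_lt (iSup_le fun n => ?_) (ENNReal.ofReal_lt_top : ENNReal.ofReal (∫ ω, h ω ∂μ) < ⊤)
  rw [← ofReal_integral_eq_lintegral_ofReal (hint1 n)
    (Filter.Eventually.of_forall fun ω => mul_nonneg (hn0 n ω) (hu0 ω))]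
  exact ENNReal.ofReal_le_ofReal (key n)

lemma aux_ville {Ω : Type*} {m0 : MeasurableSpace Ω} (μ : Measure Ω)
    [IsProbabilityMeasure μ] (K : ℕ) (ℱ : Filtration ℕ m0) (X g : ℕ → Ω → ℝ)
    (hXmeas : ∀ k ∈ Icc 1 K, Measurable[ℱ k] (X k))
    (hXint : ∀ k ∈ Icc 1 K, Integrable (fun ω => Real.exp (-X k ω / 2)) μ)
    (hgmeas : ∀ k ∈ Icc 1 K, Measurable[ℱ (k - 1)] (g k))
    (hg01 : ∀ k ∈ Icc 1 K, ∀ ω, g k ω ∈ Set.Icc (0 : ℝ) 1)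
    (hcond : ∀ k ∈ Icc 1 K, ∀ᵐ ω ∂μ,
      (μ[fun ω' => Real.exp (-X k ω' / 2)|ℱ (k - 1)]) ω ≤ 1 - g k ω)
    (ε : ℝ) (hε : 0 < ε) :
    μ {ω | ∃ k ∈ Icc 1 K, ε ≤ Real.exp (∑ s ∈ Icc 1 k, (g s ω - X s ω / 2))}
      ≤ ENNReal.ofReal (1 / ε) := by
  classical
  set M : ℕ → Ω → ℝ :=
    fun k ω => Real.exp (∑ s ∈ Icc 1 (min k K), (g s ω - X s ω / 2)) with hM
  have hMpos : ∀ k ω, 0 < M k ω := fun k ω => Real.exp_pos _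
  have hM0 : ∀ ω, M 0 ω = 1 := by intro ω; simp [hM]
  have hMmeas : ∀ k, StronglyMeasurable[ℱ k] (M k) := by
    intro k
    refine Measurable.stronglyMeasurable ?_
    refine Real.measurable_exp.comp (Finset.measurable_sum _ fun s hs => ?_)
    rw [mem_Icc] at hs
    have hsK : s ∈ Icc 1 K := mem_Icc.mpr ⟨hs.1, hs.2.trans (min_le_right _ _)⟩
    have hsk : s ≤ k := hs.2.trans (min_le_left _ _)
    exact ((hgmeas s hsK).mono (ℱ.mono ((Nat.sub_le s 1).trans hsk)) le_rfl).sub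
      (((hXmeas s hsK).mono (ℱ.mono hsk) le_rfl).div_const 2)
  have hmem : ∀ k, k < K → k + 1 ∈ Icc 1 K :=
    fun k hk => mem_Icc.mpr ⟨Nat.le_add_left 1 k, hk⟩
  have hrec : ∀ k, k < K → ∀ ω,
      M (k + 1) ω = (Real.exp (g (k + 1) ω) * M k ω) * Real.exp (-X (k + 1) ω / 2) := by
    intro k hk ω
    have h1 : min (k + 1) K = k + 1 := min_eq_left hk
    have h2 : min k K = k := min_eq_left hk.le
    simp only [hM, h1, h2]
    rw [Finset.sum_Icc_succ_top (Nat.le_add_left 1 k), Real.exp_add,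
      show g (k + 1) ω - X (k + 1) ω / 2 = g (k + 1) ω + -X (k + 1) ω / 2 by ring,
      Real.exp_add]
    ring
  have hfrozen : ∀ k, K ≤ k → M (k + 1) = M k := by
    intro k hk
    funext ω
    simp only [hM, min_eq_right hk, min_eq_right (hk.trans (Nat.le_succ k))]
  have hgmeas' : ∀ k, k < K → Measurable[ℱ k] (g (k + 1)) := by
    intro k hk
    have := hgmeas (k + 1) (hmem k hk)
    simpa using this
  have hcond' : ∀ k, k < K → ∀ᵐ ω ∂μ,
      (μ[fun ω' => Real.exp (-X (k + 1) ω' / 2)|ℱ k]) ω ≤ 1 - g (k + 1) ω := by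
    intro k hk
    have := hcond (k + 1) (hmem k hk)
    simpa using this
  have hh : ∀ k, k < K →
      StronglyMeasurable[ℱ k] (fun ω => Real.exp (g (k + 1) ω) * M k ω) :=
    fun k hk => ((Real.measurable_exp.comp (hgmeas' k hk)).mul
      (hMmeas k).measurable).stronglyMeasurable
  have hbd1 : ∀ k, k < K →
      ∀ᵐ ω ∂μ, (μ[fun ω' => Real.exp (-X (k + 1) ω' / 2)|ℱ k]) ω ≤ 1 := by
    intro k hk
    filter_upwards [hcond' k hk] with ω hω
    have := (hg01 (k + 1) (hmem k hk) ω).1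
    linarith
  have hMint : ∀ k, Integrable (M k) μ := by
    intro k
    induction k with
    | zero =>
      have : M 0 = fun _ => (1 : ℝ) := funext hM0
      rw [this]
      exact integrable_const 1
    | succ k ih =>
      by_cases hk : K ≤ k
      · rw [hfrozen k hk]; exact ih
      · push_neg at hk
        have hhint : Integrable (fun ω => Real.exp (g (k + 1) ω) * M k ω) μ := by
          refine ih.bdd_mul (c := Real.exp 1) ((Real.measurable_exp.comp
            ((hgmeas' k hk).mono (ℱ.le k) le_rfl)).aestronglyMeasurable)
            (Filter.Eventually.of_forall fun ω => ?_)
          rw [Real.norm_eq_abs, abs_of_pos (Real.exp_pos _)]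
          exact Real.exp_le_exp.mpr (hg01 (k + 1) (hmem k hk) ω).2
        have hint2 := aux_mul_integrable μ (ℱ.le k) (hh k hk)
          (fun ω => mul_nonneg (Real.exp_pos _).le (hMpos k ω).le) hhint
          (fun ω => (Real.exp_pos _).le) (hXint (k + 1) (hmem k hk)) (hbd1 k hk)
        exact hint2.congr (Filter.Eventually.of_forall fun ω => (hrec k hk ω).symm)
  have hstep : ∀ k, μ[M (k + 1)|ℱ k] ≤ᵐ[μ] M k := by
    intro k
    by_cases hk : K ≤ k
    · rw [hfrozen k hk,
        condExp_of_stronglyMeasurable (ℱ.le k) (hMmeas k) (hMint k)]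
    · push_neg at hk
      have heq : μ[M (k + 1)|ℱ k] =ᵐ[μ]
          (fun ω => Real.exp (g (k + 1) ω) * M k ω) *
            μ[fun ω' => Real.exp (-X (k + 1) ω' / 2)|ℱ k] := by
        have h1 : M (k + 1) = (fun ω => Real.exp (g (k + 1) ω) * M k ω) *
            (fun ω => Real.exp (-X (k + 1) ω / 2)) := by
          funext ω; exact hrec k hk ω
        rw [h1]
        refine condExp_mul_of_stronglyMeasurable_left (hh k hk) ?_ (hXint (k + 1) (hmem k hk))
        rw [← h1]
        exact hMint (k + 1)
      filter_upwards [heq, hcond' k hk] with ω h1 h2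
      rw [h1]
      simp only [Pi.mul_apply]
      have hg := hg01 (k + 1) (hmem k hk) ω
      have hkey : Real.exp (g (k + 1) ω) * (1 - g (k + 1) ω) ≤ 1 := by
        have h3 : 1 - g (k + 1) ω ≤ Real.exp (-g (k + 1) ω) := by
          have := Real.add_one_le_exp (-g (k + 1) ω); linarith
        calc Real.exp (g (k + 1) ω) * (1 - g (k + 1) ω)
            ≤ Real.exp (g (k + 1) ω) * Real.exp (-g (k + 1) ω) :=
              mul_le_mul_of_nonneg_left h3 (Real.exp_pos _).le
          _ = 1 := by rw [← Real.exp_add]; simp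
      calc Real.exp (g (k + 1) ω) * M k ω *
            (μ[fun ω' => Real.exp (-X (k + 1) ω' / 2)|ℱ k]) ω
          ≤ Real.exp (g (k + 1) ω) * M k ω * (1 - g (k + 1) ω) :=
            mul_le_mul_of_nonneg_left h2
              (mul_nonneg (Real.exp_pos _).le (hMpos k ω).le)
        _ = (Real.exp (g (k + 1) ω) * (1 - g (k + 1) ω)) * M k ω := by ring
        _ ≤ 1 * M k ω := mul_le_mul_of_nonneg_right hkey (hMpos k ω).le
        _ = M k ω := one_mul _
  have hadp : StronglyAdapted ℱ M := fun k => hMmeas k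
  have hsuper : Supermartingale M ℱ μ := supermartingale_nat hadp hMint hstep
  set A : Set Ω := {ω | ∃ k ∈ Icc 1 K, ε ≤ M k ω} with hA
  have hAeq : {ω | ∃ k ∈ Icc 1 K, ε ≤ Real.exp (∑ s ∈ Icc 1 k, (g s ω - X s ω / 2))}
      = A := by
    ext ω
    simp only [hA, Set.mem_setOf_eq]
    refine exists_congr fun k => ?_
    refine and_congr_right fun hk => ?_
    rw [mem_Icc] at hk
    simp only [hM, min_eq_left hk.2]
  rw [hAeq]
  have hAmeas : MeasurableSet A := by
    have : A = ⋃ k ∈ Icc 1 K, {ω | ε ≤ M k ω} := by ext ω; simp [hA]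
    rw [this]
    refine Set.Finite.measurableSet_biUnion (finite_toSet _) fun k _ => ?_
    exact measurableSet_le measurable_const ((hMmeas k).measurable.mono (ℱ.le k) le_rfl)
  set τ : Ω → WithTop ℕ := fun ω => (hittingBtwn M (Set.Ici ε) 0 K ω : ℕ) with hτdef
  have hτ : IsStoppingTime ℱ τ := Adapted.isStoppingTime_hittingBtwn (fun k => (hMmeas k).measurable) measurableSet_Ici
  have hτle : ∀ ω, τ ω ≤ K := fun ω => WithTop.coe_le_coe.mpr (hittingBtwn_le ω)
  have hsv_int : Integrable (stoppedValue M τ) μ :=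
    integrable_stoppedValue ℕ hτ hMint hτle
  have hsv_nonneg : ∀ ω, 0 ≤ stoppedValue M τ ω := fun ω => (hMpos _ ω).le
  have hEsv : ∫ ω, stoppedValue M τ ω ∂μ ≤ 1 := by
    have hsub : Submartingale (-M) ℱ μ := hsuper.neg
    have h0 : IsStoppingTime ℱ (fun _ : Ω => ((0 : ℕ) : WithTop ℕ)) := isStoppingTime_const ℱ 0
    have hmono := hsub.expected_stoppedValue_mono h0 hτ (fun ω => WithTop.coe_le_coe.mpr (Nat.zero_le _)) hτle
    have e1 : ∫ ω, stoppedValue (-M) (fun _ => ((0 : ℕ) : WithTop ℕ)) ω ∂μ = -1 := by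
      have : stoppedValue (-M) (fun _ : Ω => ((0 : ℕ) : WithTop ℕ)) = fun _ => (-1 : ℝ) := by
        funext ω; simp [stoppedValue, hM0 ω]
      rw [this]
      simp
    have e2 : ∫ ω, stoppedValue (-M) τ ω ∂μ = -∫ ω, stoppedValue M τ ω ∂μ := by
      have h : stoppedValue (-M) τ = fun ω => -(stoppedValue M τ ω) := by
        funext ω; simp [stoppedValue]
      rw [h, integral_neg]
    have hmono' : ∫ ω, stoppedValue (-M) (fun _ => ((0 : ℕ) : WithTop ℕ)) ω ∂μ
        ≤ ∫ ω, stoppedValue (-M) τ ω ∂μ := hmono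
    rw [e1, e2] at hmono'
    linarith
  have hmain : ε * (μ A).toReal ≤ 1 := by
    have h1 : ∀ ω ∈ A, ε ≤ stoppedValue M τ ω := by
      intro ω hω
      obtain ⟨k, hk, hke⟩ := hω
      rw [mem_Icc] at hk
      exact stoppedValue_hittingBtwn_mem ⟨k, ⟨Nat.zero_le _, hk.2⟩, hke⟩
    calc ε * (μ A).toReal ≤ ∫ ω in A, stoppedValue M τ ω ∂μ :=
        by have := setIntegral_ge_of_const_le hAmeas (measure_ne_top μ A) h1 hsv_int.integrableOn
           rw [smul_eq_mul, mul_comm, measureReal_def] at this; exact this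
      _ ≤ ∫ ω, stoppedValue M τ ω ∂μ :=
        setIntegral_le_integral hsv_int (Filter.Eventually.of_forall hsv_nonneg)
      _ ≤ 1 := hEsv
  have htr : (μ A).toReal ≤ 1 / ε := by
    rw [le_div_iff₀ hε, mul_comm]
    exact hmain
  calc μ A = ENNReal.ofReal (μ A).toReal :=
      (ENNReal.ofReal_toReal (measure_ne_top μ A)).symm
    _ ≤ ENNReal.ofReal (1 / ε) := ENNReal.ofReal_le_ofReal htr

/-- Abstract form of the model-based generalization bound (Proposition 5.2). -/
theorem stmt12 {Ω : Type*} {m0 : MeasurableSpace Ω} (μ : Measure Ω)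
    [IsProbabilityMeasure μ]
    (K : ℕ) (ℱ : Filtration ℕ m0)
    {I : Type*} [Fintype I] [Nonempty I]
    (X g : I → ℕ → Ω → ℝ)
    (hXmeas : ∀ i, ∀ k ∈ Icc 1 K, Measurable[ℱ k] (X i k))
    (hXint : ∀ i, ∀ k ∈ Icc 1 K,
      Integrable (fun ω => Real.exp (-X i k ω / 2)) μ)
    (hgmeas : ∀ i, ∀ k ∈ Icc 1 K, Measurable[ℱ (k - 1)] (g i k))
    (hg01 : ∀ i, ∀ k ∈ Icc 1 K, ∀ ω, g i k ω ∈ Set.Icc (0 : ℝ) 1)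
    (hcond : ∀ i, ∀ k ∈ Icc 1 K,
      ∀ᵐ ω ∂μ,
        (μ[fun ω' => Real.exp (-X i k ω' / 2) | ℱ (k - 1)]) ω ≤ 1 - g i k ω)
    (δ : ℝ) (hδ : δ ∈ Set.Ioo (0 : ℝ) 1) :
    ENNReal.ofReal (1 - δ) ≤
      μ {ω | ∀ i, ∀ k ∈ Icc 1 K,
        -∑ s ∈ Icc 1 k, X i s ω ≤
          -2 * ∑ s ∈ Icc 1 k, g i s ω
          + 2 * Real.log ((Fintype.card I : ℝ) / δ)} := by
  classical
  set ε : ℝ := (Fintype.card I : ℝ) / δ with hεdef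
  have hcard : 0 < (Fintype.card I : ℝ) := by
    exact_mod_cast Fintype.card_pos
  have hε : 0 < ε := div_pos hcard hδ.1
  set B : I → Set Ω := fun i =>
    {ω | ∃ k ∈ Icc 1 K, ε ≤ Real.exp (∑ s ∈ Icc 1 k, (g i s ω - X i s ω / 2))} with hB
  have hBbound : ∀ i, μ (B i) ≤ ENNReal.ofReal (δ / (Fintype.card I : ℝ)) := by
    intro i
    have := aux_ville μ K ℱ (X i) (g i) (hXmeas i) (hXint i) (hgmeas i) (hg01 i)
      (hcond i) ε hε
    rwa [hεdef, one_div_div] at this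
  have hBmeas : ∀ i, MeasurableSet (B i) := by
    intro i
    have h : B i = ⋃ k ∈ Icc 1 K,
        {ω | ε ≤ Real.exp (∑ s ∈ Icc 1 k, (g i s ω - X i s ω / 2))} := by
      ext ω; simp [hB]
    rw [h]
    refine Finset.measurableSet_biUnion _ fun k hk => ?_
    rw [mem_Icc] at hk
    refine measurableSet_le measurable_const ?_
    refine Real.measurable_exp.comp (Finset.measurable_sum _ fun s hs => ?_)
    rw [mem_Icc] at hs
    have hsK : s ∈ Icc 1 K := mem_Icc.mpr ⟨hs.1, hs.2.trans hk.2⟩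
    exact ((hgmeas i s hsK).mono (ℱ.le _) le_rfl).sub
      (((hXmeas i s hsK).mono (ℱ.le _) le_rfl).div_const 2)
  have hbadmeas : MeasurableSet (⋃ i, B i) := MeasurableSet.iUnion hBmeas
  have hμbad : μ (⋃ i, B i) ≤ ENNReal.ofReal δ := by
    calc μ (⋃ i, B i) ≤ ∑' i, μ (B i) := measure_iUnion_le B
      _ = ∑ i, μ (B i) := tsum_fintype _
      _ ≤ ∑ j : I, ENNReal.ofReal (δ / (Fintype.card I : ℝ)) :=
          Finset.sum_le_sum fun i _ => hBbound i
      _ = (Fintype.card I : ℝ≥0∞) * ENNReal.ofReal (δ / (Fintype.card I : ℝ)) := by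
          rw [Finset.sum_const, Finset.card_univ, nsmul_eq_mul]
      _ = ENNReal.ofReal δ := by
          rw [← ENNReal.ofReal_natCast, ← ENNReal.ofReal_mul (Nat.cast_nonneg _),
            mul_div_cancel₀ _ (ne_of_gt hcard)]
  have hsubset : (⋃ i, B i)ᶜ ⊆ {ω | ∀ i, ∀ k ∈ Icc 1 K,
      -∑ s ∈ Icc 1 k, X i s ω ≤
        -2 * ∑ s ∈ Icc 1 k, g i s ω + 2 * Real.log ε} := by
    intro ω hω i k hk
    have hnot : ¬ (ε ≤ Real.exp (∑ s ∈ Icc 1 k, (g i s ω - X i s ω / 2))) := by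
      intro hcontra
      exact hω (Set.mem_iUnion.mpr ⟨i, ⟨k, hk, hcontra⟩⟩)
    push_neg at hnot
    have hlog : ∑ s ∈ Icc 1 k, (g i s ω - X i s ω / 2) < Real.log ε := by
      have := Real.log_lt_log (Real.exp_pos _) hnot
      rwa [Real.log_exp] at this
    rw [Finset.sum_sub_distrib, ← Finset.sum_div] at hlog
    linarith
  calc ENNReal.ofReal (1 - δ) = 1 - ENNReal.ofReal δ := by
        rw [ENNReal.ofReal_sub _ hδ.1.le, ENNReal.ofReal_one]
    _ ≤ 1 - μ (⋃ i, B i) := tsub_le_tsub_left hμbad 1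
    _ = μ (⋃ i, B i)ᶜ := (prob_compl_eq_one_sub hbadmeas).symm
    _ ≤ μ _ := measure_mono hsubset
end

section
/- There exists an absolute constant C > 0 such that the following holds. Let (Omega, F, P) be a probability space equipped with a filtration (F_k) for k in {0, 1, ..., K}, let I be a finite nonempty index set, let R > 0, and for each i in I and k in {1, ..., K} let W_{i,k} be a real-valued random variable that is F_k-measurable with |W_{i,k}| <= R almost surely, such that m_{i,k} := E[ W_{i,k} | F_{k-1} ] >= 0 almost surely and E[ W_{i,k}^2 | F_{k-1} ] <= 4 * R * m_{i,k} almost surely. Then for any delta in (0,1), with probability at least 1 - delta the following holds simultaneously for all i in I and all k in {1, ..., K}: - sum_{s=1}^k W_{i,s} <= C * R * log( K * |I| / delta ). -/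
open MeasureTheory Finset

lemma exp_le_quad {x : ℝ} (hx : |x| ≤ 1) : Real.exp x ≤ 1 + x + x ^ 2 := by
  have h := Real.exp_bound hx (n := 2) (by norm_num)
  norm_num [Finset.sum_range_succ] at h
  have h2 := (abs_le.mp h).2
  nlinarith [sq_abs x, sq_nonneg x]

lemma key_aux {Ω : Type} {m0 : MeasurableSpace Ω} {μ : Measure Ω}
    [IsProbabilityMeasure μ] {K : ℕ} {ℱ : Filtration ℕ m0} {R : ℝ} (hR : 0 < R)
    {W : ℕ → Ω → ℝ}
    (hmeas : ∀ k ∈ Icc 1 K, Measurable[ℱ k] (W k))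
    (hbdd : ∀ k ∈ Icc 1 K, ∀ᵐ ω ∂μ, |W k ω| ≤ R)
    (hpos : ∀ k ∈ Icc 1 K, ∀ᵐ ω ∂μ, 0 ≤ (μ[W k | ℱ (k - 1)]) ω)
    (hvar : ∀ k ∈ Icc 1 K, ∀ᵐ ω ∂μ,
      (μ[fun ω' => W k ω' ^ 2 | ℱ (k - 1)]) ω ≤ 4 * R * (μ[W k | ℱ (k - 1)]) ω) :
    ∀ k ≤ K,
      Integrable (fun ω => Real.exp (-(1 / (4 * R) * ∑ s ∈ Icc 1 k, W s ω))) μ ∧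
      ∫ ω, Real.exp (-(1 / (4 * R) * ∑ s ∈ Icc 1 k, W s ω)) ∂μ ≤ 1 := by
  set lam : ℝ := 1 / (4 * R) with hlam
  have hlampos : 0 < lam := by positivity
  have hlamR : lam * R = 1 / 4 := by rw [hlam]; field_simp
  have hWm : ∀ k ∈ Icc 1 K, Measurable (W k) := fun k hk =>
    (hmeas k hk).mono (ℱ.le k) le_rfl
  intro k hkK
  induction k with
  | zero =>
      constructor
      · exact (integrable_const (1 : ℝ)).congr (ae_of_all μ fun ω => by simp)
      · simp
  | succ k ih =>
      have hkK' : k ≤ K := le_of_lt (Nat.lt_of_succ_le hkK)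
      obtain ⟨ihint, ihle⟩ := ih hkK'
      have hk1 : k + 1 ∈ Icc 1 K := mem_Icc.mpr ⟨Nat.succ_le_succ (Nat.zero_le k), hkK⟩
      set f : Ω → ℝ := fun ω => Real.exp (-(lam * ∑ s ∈ Icc 1 k, W s ω)) with hf
      set g : Ω → ℝ := fun ω => Real.exp (-(lam * W (k + 1) ω)) with hg
      have heq : (fun ω => Real.exp (-(lam * ∑ s ∈ Icc 1 (k + 1), W s ω))) = f * g := by
        funext ω
        simp only [hf, hg, Pi.mul_apply]
        rw [Finset.sum_Icc_succ_top (Nat.le_add_left 1 k), mul_add, neg_add, Real.exp_add]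
      have hfmeas : StronglyMeasurable[ℱ k] f := by
        refine Measurable.stronglyMeasurable ?_
        refine (Measurable.neg ?_).exp
        refine Measurable.const_mul ?_ lam
        refine Finset.measurable_sum _ fun s hs => ?_
        have hs' := mem_Icc.mp hs
        exact (hmeas s (mem_Icc.mpr ⟨hs'.1, hs'.2.trans hkK'⟩)).mono (ℱ.mono hs'.2) le_rfl
      have hbW := hbdd (k + 1) hk1
      have hgm : Measurable g := ((hWm (k + 1) hk1).const_mul lam).neg.exp
      have hgint : Integrable g μ := by
        refine (integrable_const (Real.exp (lam * R))).mono' hgm.aestronglyMeasurable ?_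
        filter_upwards [hbW] with ω hb
        rw [Real.norm_eq_abs, abs_of_pos (Real.exp_pos _)]
        refine Real.exp_le_exp.mpr ?_
        nlinarith [abs_le.mp hb]
      have hfm : Measurable f := hfmeas.measurable.mono (ℱ.le k) le_rfl
      have hfbd : ∀ᵐ ω ∂μ, |f ω| ≤ Real.exp (lam * k * R) := by
        have hall : ∀ᵐ ω ∂μ, ∀ s, s ∈ Icc 1 K → |W s ω| ≤ R := by
          rw [ae_all_iff]
          intro s
          by_cases hs : s ∈ Icc 1 K
          · filter_upwards [hbdd s hs] with ω h using fun _ => h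
          · filter_upwards with ω h using absurd h hs
        filter_upwards [hall] with ω hb
        rw [abs_of_pos (Real.exp_pos _)]
        refine Real.exp_le_exp.mpr ?_
        have hsum : |∑ s ∈ Icc 1 k, W s ω| ≤ (k : ℝ) * R := by
          calc |∑ s ∈ Icc 1 k, W s ω| ≤ ∑ s ∈ Icc 1 k, |W s ω| :=
                Finset.abs_sum_le_sum_abs _ _
            _ ≤ ∑ _s ∈ Icc 1 k, R := by
                refine Finset.sum_le_sum fun s hs => ?_
                have hs' := mem_Icc.mp hs
                exact hb s (mem_Icc.mpr ⟨hs'.1, hs'.2.trans hkK'⟩)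
            _ = (k : ℝ) * R := by
                rw [Finset.sum_const, Nat.card_Icc]
                simp [nsmul_eq_mul]
        have := (abs_le.mp hsum).1
        nlinarith
      have hfgint : Integrable (f * g) μ := by
        refine (integrable_const (Real.exp (lam * k * R) * Real.exp (lam * R))).mono'
          (hfm.mul hgm).aestronglyMeasurable ?_
        filter_upwards [hfbd, hbW] with ω h1 h2
        rw [Pi.mul_apply, Real.norm_eq_abs, abs_mul]
        refine mul_le_mul (by simpa using h1) ?_ (abs_nonneg _) (Real.exp_pos _).le
        rw [abs_of_pos (Real.exp_pos _)]
        refine Real.exp_le_exp.mpr ?_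
        nlinarith [abs_le.mp h2]
      have hWint : Integrable (W (k + 1)) μ := by
        refine (integrable_const R).mono' (hWm (k + 1) hk1).aestronglyMeasurable ?_
        filter_upwards [hbW] with ω h using h
      have hW2int : Integrable (fun ω => W (k + 1) ω ^ 2) μ := by
        refine (integrable_const (R ^ 2)).mono'
          ((hWm (k + 1) hk1).pow_const 2).aestronglyMeasurable ?_
        filter_upwards [hbW] with ω h
        simpa [Real.norm_eq_abs, abs_pow] using pow_le_pow_left₀ (abs_nonneg _) h 2
      -- the quadratic dominating function
      set q : Ω → ℝ := (fun _ => (1 : ℝ)) + (-lam) • W (k + 1)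
          + (lam ^ 2) • (fun ω => W (k + 1) ω ^ 2) with hq
      have hBint : Integrable ((-lam) • W (k + 1)) μ := hWint.smul (-lam)
      have hCint : Integrable ((lam ^ 2) • fun ω => W (k + 1) ω ^ 2) μ := hW2int.smul (lam ^ 2)
      have hqint : Integrable q μ := ((integrable_const 1).add hBint).add hCint
      have hgq : g ≤ᵐ[μ] q := by
        filter_upwards [hbW] with ω hb
        have hx : |(-(lam * W (k + 1) ω))| ≤ 1 := by
          rw [abs_neg, abs_mul, abs_of_pos hlampos]
          nlinarith [abs_nonneg (W (k + 1) ω)]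
        have h := exp_le_quad hx
        simp only [hq, hg, Pi.add_apply, Pi.smul_apply, smul_eq_mul]
        nlinarith [h]
      have hpos' := hpos (k + 1) hk1
      have hvar' := hvar (k + 1) hk1
      simp only [Nat.add_sub_cancel] at hpos' hvar'
      have e1 := condExp_add (μ := μ) (m := ℱ k) ((integrable_const (1 : ℝ)).add hBint) hCint
      have e2 := condExp_add (μ := μ) (m := ℱ k) (integrable_const (1 : ℝ)) hBint
      have e3 := condExp_smul (μ := μ) (m := ℱ k) (-lam) (W (k + 1))
      have e4 := condExp_smul (μ := μ) (m := ℱ k) (lam ^ 2) (fun ω => W (k + 1) ω ^ 2)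
      have hone : μ[g | ℱ k] ≤ᵐ[μ] fun _ => (1 : ℝ) := by
        filter_upwards [condExp_mono hgint hqint hgq, e1, e2, e3, e4, hpos', hvar']
          with ω h1 h2 h3 h4 h5 hp hv
        have hc : (μ[(fun _ => (1 : ℝ)) | ℱ k]) ω = 1 := by
          rw [condExp_const (ℱ.le k)]
        simp only [Pi.add_apply, Pi.smul_apply, smul_eq_mul] at h2 h3 h4 h5
        have hkey : lam ^ 2 * (4 * R * (μ[W (k + 1) | ℱ k]) ω)
            = lam * (μ[W (k + 1) | ℱ k]) ω := by
          rw [hlam]; field_simp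
        have h6 : lam ^ 2 * (μ[fun ω' => W (k + 1) ω' ^ 2 | ℱ k]) ω
            ≤ lam ^ 2 * (4 * R * (μ[W (k + 1) | ℱ k]) ω) :=
          mul_le_mul_of_nonneg_left hv (sq_nonneg lam)
        calc (μ[g | ℱ k]) ω ≤ (μ[q | ℱ k]) ω := h1
          _ = (μ[(fun _ => (1 : ℝ)) | ℱ k]) ω + (-lam) * (μ[W (k + 1) | ℱ k]) ω
              + lam ^ 2 * (μ[fun ω' => W (k + 1) ω' ^ 2 | ℱ k]) ω := by
                rw [h2, h3, h4, h5]
          _ ≤ 1 := by rw [hc]; linarith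
      have hpull : μ[f * g | ℱ k] =ᵐ[μ] f * μ[g | ℱ k] :=
        condExp_mul_of_stronglyMeasurable_left hfmeas hfgint hgint
      have hae : μ[f * g | ℱ k] ≤ᵐ[μ] f := by
        filter_upwards [hpull, hone] with ω h1 h2
        rw [h1, Pi.mul_apply]
        exact mul_le_of_le_one_right (Real.exp_pos _).le h2
      have hint1 : ∫ ω, (f * g) ω ∂μ ≤ 1 := by
        rw [← integral_condExp (ℱ.le k) (f := f * g)]
        calc ∫ ω, (μ[f * g | ℱ k]) ω ∂μ ≤ ∫ ω, f ω ∂μ :=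
              integral_mono_ae integrable_condExp ihint hae
          _ ≤ 1 := ihle
      refine ⟨?_, ?_⟩
      · rw [heq]; exact hfgint
      · rw [heq]; exact hint1

/-- Abstract form of Lemma A.1 of the paper (bound on the loss of the true
hypothesis in the model-free setting). -/
theorem stmt14 : ∃ C : ℝ, 0 < C ∧
    ∀ (Ω : Type) (m0 : MeasurableSpace Ω) (μ : Measure Ω),
      IsProbabilityMeasure μ →
    ∀ (K : ℕ) (ℱ : Filtration ℕ m0) (I : Type) (_ : Fintype I) (_ : Nonempty I)
      (R : ℝ), 0 < R →
    ∀ W : I → ℕ → Ω → ℝ,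
      (∀ i, ∀ k ∈ Icc 1 K, Measurable[ℱ k] (W i k)) →
      (∀ i, ∀ k ∈ Icc 1 K, ∀ᵐ ω ∂μ, |W i k ω| ≤ R) →
      (∀ i, ∀ k ∈ Icc 1 K, ∀ᵐ ω ∂μ, 0 ≤ (μ[W i k | ℱ (k - 1)]) ω) →
      (∀ i, ∀ k ∈ Icc 1 K, ∀ᵐ ω ∂μ,
        (μ[fun ω' => W i k ω' ^ 2 | ℱ (k - 1)]) ω ≤
          4 * R * (μ[W i k | ℱ (k - 1)]) ω) →
    ∀ δ : ℝ, δ ∈ Set.Ioo (0 : ℝ) 1 →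
      ENNReal.ofReal (1 - δ) ≤
        μ {ω | ∀ i, ∀ k ∈ Icc 1 K,
          -∑ s ∈ Icc 1 k, W i s ω ≤
            C * R * Real.log ((K : ℝ) * (Fintype.card I : ℝ) / δ)} := by
  refine ⟨4, by norm_num, ?_⟩
  intro Ω m0 μ hprob K ℱ I hFin hNe R hR W hmeas hbdd hpos hvar δ hδ
  classical
  obtain ⟨hδ0, hδ1⟩ := hδ
  rcases Nat.eq_zero_or_pos K with rfl | hK
  · have : {ω | ∀ i, ∀ k ∈ Icc 1 (0:ℕ), -∑ s ∈ Icc 1 k, W i s ω ≤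
        4 * R * Real.log ((0:ℕ) * (Fintype.card I : ℝ) / δ)} = Set.univ := by
      ext ω; simp
    rw [this, measure_univ]
    exact ENNReal.ofReal_le_one.mpr (by linarith)
  -- setup
  set lam : ℝ := 1 / (4 * R) with hlam
  have hlampos : 0 < lam := by positivity
  set t : ℝ := 4 * R * Real.log ((K : ℝ) * (Fintype.card I : ℝ) / δ) with ht
  set a : ℝ := (K : ℝ) * (Fintype.card I : ℝ) / δ with ha
  have hcardpos : (0 : ℝ) < Fintype.card I := by
    have := Fintype.card_pos_iff.mpr hNe
    exact_mod_cast this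
  have hKpos : (0 : ℝ) < K := by exact_mod_cast hK
  have hapos : 0 < a := by rw [ha]; positivity
  have hlamt : lam * t = Real.log a := by
    rw [hlam, ht]; field_simp
  have key := fun i => key_aux hR (hmeas i) (hbdd i) (hpos i) (hvar i)
  -- per-pair Markov bound
  have hbad : ∀ i, ∀ k ∈ Icc 1 K,
      μ {ω | t < -∑ s ∈ Icc 1 k, W i s ω}
        ≤ ENNReal.ofReal (δ / ((K : ℝ) * (Fintype.card I : ℝ))) := by
    intro i k hk
    obtain ⟨hint, hle⟩ := key i k (mem_Icc.mp hk).2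
    have hsub : {ω | t < -∑ s ∈ Icc 1 k, W i s ω}
        ⊆ {ω | a ≤ Real.exp (-(lam * ∑ s ∈ Icc 1 k, W i s ω))} := by
      intro ω hω
      simp only [Set.mem_setOf_eq] at hω ⊢
      have h1 : lam * t ≤ lam * (-∑ s ∈ Icc 1 k, W i s ω) :=
        mul_le_mul_of_nonneg_left hω.le hlampos.le
      calc a = Real.exp (Real.log a) := (Real.exp_log hapos).symm
        _ = Real.exp (lam * t) := by rw [hlamt]
        _ ≤ Real.exp (-(lam * ∑ s ∈ Icc 1 k, W i s ω)) := by
            rw [Real.exp_le_exp]; rw [mul_neg] at h1; exact h1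
    have hmar := mul_meas_ge_le_integral_of_nonneg
      (ae_of_all μ fun ω => (Real.exp_pos _).le) hint a
    have htr : (μ {ω | a ≤ Real.exp (-(lam * ∑ s ∈ Icc 1 k, W i s ω))}).toReal
        ≤ 1 / a := by
      rw [le_div_iff₀ hapos]
      calc (μ _).toReal * a = a * (μ _).toReal := mul_comm _ _
        _ ≤ _ := hmar
        _ ≤ 1 := hle
    have h1a : 1 / a = δ / ((K : ℝ) * (Fintype.card I : ℝ)) := by
      rw [ha, one_div_div]
    calc μ {ω | t < -∑ s ∈ Icc 1 k, W i s ω}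
        ≤ μ {ω | a ≤ Real.exp (-(lam * ∑ s ∈ Icc 1 k, W i s ω))} := measure_mono hsub
      _ = ENNReal.ofReal ((μ {ω | a ≤ Real.exp (-(lam * ∑ s ∈ Icc 1 k, W i s ω))}).toReal) :=
          (ENNReal.ofReal_toReal (measure_ne_top μ _)).symm
      _ ≤ ENNReal.ofReal (δ / ((K : ℝ) * (Fintype.card I : ℝ))) := by
          rw [← h1a]; exact ENNReal.ofReal_le_ofReal htr
  -- good set
  set G : Set Ω := {ω | ∀ i, ∀ k ∈ Icc 1 K, -∑ s ∈ Icc 1 k, W i s ω ≤ t} with hG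
  have hSm : ∀ (i : I), ∀ k ∈ Icc 1 K, Measurable fun ω => ∑ s ∈ Icc 1 k, W i s ω := by
    intro i k hk
    refine Finset.measurable_sum _ fun s hs => ?_
    have hs' := mem_Icc.mp hs
    exact ((hmeas i s (mem_Icc.mpr ⟨hs'.1, hs'.2.trans (mem_Icc.mp hk).2⟩)).mono
      (ℱ.le s) le_rfl)
  have hGm : MeasurableSet G := by
    rw [hG]
    simp only [Set.setOf_forall]
    refine MeasurableSet.iInter fun i => MeasurableSet.iInter fun k =>
      MeasurableSet.iInter fun hk => ?_
    exact measurableSet_le ((hSm i k hk).neg) measurable_const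
  have hsub : Gᶜ ⊆ ⋃ i, ⋃ k ∈ Icc 1 K, {ω | t < -∑ s ∈ Icc 1 k, W i s ω} := by
    intro ω hω
    simp only [hG, Set.mem_compl_iff, Set.mem_setOf_eq, not_forall] at hω
    obtain ⟨i, k, hk, hlt⟩ := hω
    simp only [Set.mem_iUnion, Set.mem_setOf_eq]
    exact ⟨i, k, hk, not_le.mp hlt⟩
  have hGc : μ Gᶜ ≤ ENNReal.ofReal δ := by
    calc μ Gᶜ ≤ ∑' (i : I), μ (⋃ k ∈ Icc 1 K, {ω | t < -∑ s ∈ Icc 1 k, W i s ω}) :=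
          (measure_mono hsub).trans (measure_iUnion_le _)
      _ ≤ ∑' (i : I), ∑ k ∈ Icc 1 K, ENNReal.ofReal (δ / ((K : ℝ) * (Fintype.card I : ℝ))) := by
          refine ENNReal.tsum_le_tsum fun i => ?_
          refine (measure_biUnion_finset_le _ _).trans ?_
          exact Finset.sum_le_sum fun k hk => hbad i k hk
      _ = (Fintype.card I : ENNReal) * ((K : ENNReal) *
            ENNReal.ofReal (δ / ((K : ℝ) * (Fintype.card I : ℝ)))) := by
          rw [tsum_fintype]
          simp [Finset.sum_const, Nat.card_Icc, mul_comm]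
      _ = ENNReal.ofReal δ := by
          rw [← ENNReal.ofReal_natCast (Fintype.card I), ← ENNReal.ofReal_natCast K,
            ← ENNReal.ofReal_mul (by positivity), ← ENNReal.ofReal_mul (by positivity)]
          congr 1
          field_simp
  have hadd : μ G + μ Gᶜ = 1 := by
    rw [measure_add_measure_compl hGm, measure_univ]
  have hgoal : ENNReal.ofReal (1 - δ) ≤ μ G := by
    have h1 : ENNReal.ofReal (1 - δ) = 1 - ENNReal.ofReal δ := by
      rw [ENNReal.ofReal_sub _ hδ0.le, ENNReal.ofReal_one]
    rw [h1, tsub_le_iff_right]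
    calc (1 : ENNReal) = μ G + μ Gᶜ := hadd.symm
      _ ≤ μ G + ENNReal.ofReal δ := add_le_add_right hGc _
  exact hgoal
end

section
/- Consider a finite-horizon two-player zero-sum Markov game with finite nonempty state set S, finite nonempty action sets A (max-player) and B (min-player), horizon H, transition kernels P_h : S x A x B -> (S -> R) with P_h(x,a,b,.) nonnegative and summing to 1 over S for each h in {1,...,H}, reward functions r_h : S x A x B -> R, and fixed initial state x_1 in S. For W : S -> R write (P_h W)(x,a,b) = sum_{x'} P_h(x,a,b,x') W(x'). Given a policy pair (mu, nu), where mu_h : S -> (A -> R) and nu_h : S -> (B -> R) assign probability vectors, define the value functions backward by V_{H+1}^{mu,nu} = 0 and V_h^{mu,nu}(x) = sum_{a,b} mu_h(x,a) nu_h(x,b) [ r_h(x,a,b) + (P_h V_{h+1}^{mu,nu})(x,a,b) ]; define the occupancy measures by d_1 = the point mass at x_1 and d_{h+1}(x') = sum_{x,a,b} d_h(x) mu_h(x,a) nu_h(x,b) P_h(x,a,b,x'), and for G : S x A x B -> R write E_{(mu,nu)}[G_h] = sum_{x,a,b} d_h(x) mu_h(x,a) nu_h(x,b) G(x,a,b).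 Let f = (f_1, ..., f_{H+1}) with f_h : S x A x B -> R and f_{H+1} = 0, and define V_{h,f}(x) = sup over probability vectors p on A of min_{b in B} sum_a p(a) f_h(x,a,b). Suppose the max-player policy mu is Nash-greedy with respect to f, i.e., for all h in {1,...,H} and all x in S, min_{b in B} sum_a mu_h(x,a) f_h(x,a,b) = V_{h,f}(x). Then for every min-player policy nu: V_{1,f}(x_1) - V_1^{mu,nu}(x_1) <= sum_{h=1}^H E_{(mu,nu)}[ E_h ], where E_h(x,a,b) = f_h(x,a,b) - r_h(x,a,b) - (P_h V_{h+1,f})(x,a,b). -/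
open Finset

/-- Auxiliary: commuting a quadruple sum to bring the last index out front. -/
theorem swap4 {S A B : Type*} [Fintype S] [Fintype A] [Fintype B]
    (g : S → A → B → S → ℝ) :
    ∑ x : S, ∑ a : A, ∑ b : B, ∑ x' : S, g x a b x'
      = ∑ x' : S, ∑ x : S, ∑ a : A, ∑ b : B, g x a b x' := by
  have h1 : ∀ x : S, ∑ a : A, ∑ b : B, ∑ x' : S, g x a b x'
      = ∑ x' : S, ∑ a : A, ∑ b : B, g x a b x' := by
    intro x
    have h2 : ∀ a : A, ∑ b : B, ∑ x' : S, g x a b x'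
        = ∑ x' : S, ∑ b : B, g x a b x' := fun a => Finset.sum_comm
    calc ∑ a : A, ∑ b : B, ∑ x' : S, g x a b x'
        = ∑ a : A, ∑ x' : S, ∑ b : B, g x a b x' :=
          Finset.sum_congr rfl fun a _ => h2 a
      _ = ∑ x' : S, ∑ a : A, ∑ b : B, g x a b x' := Finset.sum_comm
  calc ∑ x : S, ∑ a : A, ∑ b : B, ∑ x' : S, g x a b x'
      = ∑ x : S, ∑ x' : S, ∑ a : A, ∑ b : B, g x a b x' :=
        Finset.sum_congr rfl fun x _ => h1 x
    _ = ∑ x' : S, ∑ x : S, ∑ a : A, ∑ b : B, g x a b x' := Finset.sum_comm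

/-- Lemma B.1 of the paper: value decomposition for the max-player in a
finite two-player zero-sum Markov game. -/
theorem stmt16
    {S A B : Type*} [Fintype S] [Fintype A] [Fintype B]
    [Nonempty S] [Nonempty A] [Nonempty B] [DecidableEq S]
    (H : ℕ) (hH : 0 < H)
    (P : ℕ → S → A → B → S → ℝ) (r : ℕ → S → A → B → ℝ) (x1 : S)
    (hPnn : ∀ h ∈ Icc 1 H, ∀ x a b x', 0 ≤ P h x a b x')
    (hPsum : ∀ h ∈ Icc 1 H, ∀ x a b, ∑ x', P h x a b x' = 1)
    (mu : ℕ → S → A → ℝ) (nu : ℕ → S → B → ℝ)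
    (hmunn : ∀ h ∈ Icc 1 H, ∀ x a, 0 ≤ mu h x a)
    (hmusum : ∀ h ∈ Icc 1 H, ∀ x, ∑ a, mu h x a = 1)
    (hnunn : ∀ h ∈ Icc 1 H, ∀ x b, 0 ≤ nu h x b)
    (hnusum : ∀ h ∈ Icc 1 H, ∀ x, ∑ b, nu h x b = 1)
    -- value functions of the joint policy (mu, nu), defined backward
    (V : ℕ → S → ℝ)
    (hVtop : ∀ x, V (H + 1) x = 0)
    (hVrec : ∀ h ∈ Icc 1 H, ∀ x,
      V h x = ∑ a, ∑ b, mu h x a * nu h x b *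
        (r h x a b + ∑ x', P h x a b x' * V (h + 1) x'))
    -- occupancy measures of the joint policy (mu, nu)
    (docc : ℕ → S → ℝ)
    (hd1 : ∀ x, docc 1 x = if x = x1 then 1 else 0)
    (hdrec : ∀ h ∈ Icc 1 H, ∀ x',
      docc (h + 1) x' = ∑ x, ∑ a, ∑ b,
        docc h x * mu h x a * nu h x b * P h x a b x')
    -- model-free hypothesis f and its Nash-equilibrium value function
    (f : ℕ → S → A → B → ℝ)
    (hftop : ∀ x a b, f (H + 1) x a b = 0)
    (Vf : ℕ → S → ℝ)
    (hVf : ∀ h x, Vf h x = sSup {v : ℝ | ∃ p : A → ℝ,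
      (∀ a, 0 ≤ p a) ∧ (∑ a, p a = 1) ∧
      v = Finset.univ.inf' Finset.univ_nonempty
        (fun b => ∑ a, p a * f h x a b)})
    -- mu is Nash-greedy with respect to f
    (hgreedy : ∀ h ∈ Icc 1 H, ∀ x,
      Finset.univ.inf' Finset.univ_nonempty
        (fun b => ∑ a, mu h x a * f h x a b) = Vf h x) :
    Vf 1 x1 - V 1 x1 ≤
      ∑ h ∈ Icc 1 H, ∑ x, ∑ a, ∑ b,
        docc h x * mu h x a * nu h x b *
          (f h x a b - r h x a b - ∑ x', P h x a b x' * Vf (h + 1) x') := by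
  classical
  set Err : ℕ → ℝ := fun h => ∑ x, ∑ a, ∑ b,
    docc h x * mu h x a * nu h x b *
      (f h x a b - r h x a b - ∑ x', P h x a b x' * Vf (h + 1) x') with hErr
  set G : ℕ → ℝ := fun h => ∑ x, docc h x * (Vf h x - V h x) with hGdef
  -- nonnegativity of the occupancy measure
  have hdnn : ∀ h, 1 ≤ h → h ≤ H + 1 → ∀ x, 0 ≤ docc h x := by
    intro h h1
    induction h, h1 using Nat.le_induction with
    | base =>
      intro _ x; rw [hd1]; split <;> norm_num
    | succ h hh ih =>
      intro hle x'
      have hmem : h ∈ Icc 1 H := by simp only [mem_Icc]; omega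
      rw [hdrec h hmem x']
      refine Finset.sum_nonneg fun x _ => Finset.sum_nonneg fun a _ =>
        Finset.sum_nonneg fun b _ => ?_
      exact mul_nonneg (mul_nonneg (mul_nonneg (ih (by omega) x)
        (hmunn h hmem x a)) (hnunn h hmem x b)) (hPnn h hmem x a b x')
  -- Vf vanishes at the horizon
  have hVfTop : ∀ x, Vf (H + 1) x = 0 := by
    intro x
    rw [hVf]
    have hset : {v : ℝ | ∃ p : A → ℝ,
        (∀ a, 0 ≤ p a) ∧ (∑ a, p a = 1) ∧
        v = Finset.univ.inf' Finset.univ_nonempty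
          (fun b => ∑ a, p a * f (H + 1) x a b)} = {0} := by
      ext v
      simp only [Set.mem_setOf_eq, Set.mem_singleton_iff]
      constructor
      · rintro ⟨p, _, _, rfl⟩
        simp [hftop, Finset.inf'_const]
      · rintro rfl
        refine ⟨fun _ => (Fintype.card A : ℝ)⁻¹, fun a => by positivity, ?_, ?_⟩
        · rw [Finset.sum_const, Finset.card_univ, nsmul_eq_mul]
          have : (Fintype.card A : ℝ) ≠ 0 := by
            exact_mod_cast Fintype.card_ne_zero
          field_simp
        · simp [hftop, Finset.inf'_const]
    rw [hset, csSup_singleton]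
  -- Nash-greediness plus averaging over the min-player
  have hVfle : ∀ h ∈ Icc 1 H, ∀ x,
      Vf h x ≤ ∑ a, ∑ b, mu h x a * nu h x b * f h x a b := by
    intro h hh x
    rw [← hgreedy h hh x]
    set g : B → ℝ := fun b => ∑ a, mu h x a * f h x a b with hg
    have h1 : Finset.univ.inf' Finset.univ_nonempty g ≤ ∑ b, nu h x b * g b := by
      calc Finset.univ.inf' Finset.univ_nonempty g
          = ∑ b, nu h x b * Finset.univ.inf' Finset.univ_nonempty g := by
            rw [← Finset.sum_mul, hnusum h hh x, one_mul]
        _ ≤ ∑ b, nu h x b * g b :=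
            Finset.sum_le_sum fun b _ => mul_le_mul_of_nonneg_left
              (Finset.inf'_le _ (mem_univ b)) (hnunn h hh x b)
    refine h1.trans (le_of_eq ?_)
    calc ∑ b, nu h x b * g b
        = ∑ b, ∑ a, nu h x b * (mu h x a * f h x a b) := by
          simp_rw [hg, Finset.mul_sum]
      _ = ∑ a, ∑ b, nu h x b * (mu h x a * f h x a b) := Finset.sum_comm
      _ = ∑ a, ∑ b, mu h x a * nu h x b * f h x a b :=
          Finset.sum_congr rfl fun a _ => Finset.sum_congr rfl fun b _ => by ring
  -- one-step decomposition
  have step : ∀ h ∈ Icc 1 H, G h ≤ Err h + G (h + 1) := by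
    intro h hh
    have hh' := mem_Icc.mp hh
    have hle1 : G h ≤ ∑ x, ∑ a, ∑ b,
        docc h x * mu h x a * nu h x b *
          (f h x a b - (r h x a b + ∑ x', P h x a b x' * V (h + 1) x')) := by
      refine Finset.sum_le_sum fun x _ => ?_
      have hdiff : Vf h x - V h x ≤ ∑ a, ∑ b, mu h x a * nu h x b *
          (f h x a b - (r h x a b + ∑ x', P h x a b x' * V (h + 1) x')) := by
        have h2 := hVfle h hh x
        have h3 : ∑ a, ∑ b, mu h x a * nu h x b *
            (f h x a b - (r h x a b + ∑ x', P h x a b x' * V (h + 1) x'))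
            = (∑ a, ∑ b, mu h x a * nu h x b * f h x a b)
              - ∑ a, ∑ b, mu h x a * nu h x b *
                (r h x a b + ∑ x', P h x a b x' * V (h + 1) x') := by
          simp_rw [mul_sub, Finset.sum_sub_distrib]
        rw [h3, ← hVrec h hh x]
        linarith
      calc docc h x * (Vf h x - V h x)
          ≤ docc h x * (∑ a, ∑ b, mu h x a * nu h x b *
              (f h x a b - (r h x a b + ∑ x', P h x a b x' * V (h + 1) x'))) :=
            mul_le_mul_of_nonneg_left hdiff (hdnn h hh'.1 (by omega) x)
        _ = ∑ a, ∑ b, docc h x * mu h x a * nu h x b *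
              (f h x a b - (r h x a b + ∑ x', P h x a b x' * V (h + 1) x')) := by
            simp_rw [Finset.mul_sum]
            exact Finset.sum_congr rfl fun a _ =>
              Finset.sum_congr rfl fun b _ => by ring
    refine hle1.trans (le_of_eq ?_)
    have hsplit : ∀ x a b, docc h x * mu h x a * nu h x b *
        (f h x a b - (r h x a b + ∑ x', P h x a b x' * V (h + 1) x'))
        = docc h x * mu h x a * nu h x b *
            (f h x a b - r h x a b - ∑ x', P h x a b x' * Vf (h + 1) x')
          + ∑ x', docc h x * mu h x a * nu h x b * P h x a b x' *
              (Vf (h + 1) x' - V (h + 1) x') := by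
      intro x a b
      have he : ∑ x', docc h x * mu h x a * nu h x b * P h x a b x' *
          (Vf (h + 1) x' - V (h + 1) x')
          = docc h x * mu h x a * nu h x b *
            ((∑ x', P h x a b x' * Vf (h + 1) x')
              - ∑ x', P h x a b x' * V (h + 1) x') := by
        rw [← Finset.sum_sub_distrib, Finset.mul_sum]
        exact Finset.sum_congr rfl fun x' _ => by ring
      rw [he]; ring
    calc ∑ x, ∑ a, ∑ b,
          docc h x * mu h x a * nu h x b *
            (f h x a b - (r h x a b + ∑ x', P h x a b x' * V (h + 1) x'))
        = ∑ x, ∑ a, ∑ b,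
            (docc h x * mu h x a * nu h x b *
              (f h x a b - r h x a b - ∑ x', P h x a b x' * Vf (h + 1) x')
            + ∑ x', docc h x * mu h x a * nu h x b * P h x a b x' *
                (Vf (h + 1) x' - V (h + 1) x')) :=
          Finset.sum_congr rfl fun x _ => Finset.sum_congr rfl fun a _ =>
            Finset.sum_congr rfl fun b _ => hsplit x a b
      _ = Err h + ∑ x, ∑ a, ∑ b, ∑ x',
            docc h x * mu h x a * nu h x b * P h x a b x' *
              (Vf (h + 1) x' - V (h + 1) x') := by
          simp only [Finset.sum_add_distrib]
          rfl
      _ = Err h + ∑ x', (∑ x, ∑ a, ∑ b,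
            docc h x * mu h x a * nu h x b * P h x a b x') *
              (Vf (h + 1) x' - V (h + 1) x') := by
          rw [swap4]
          congr 1
          refine Finset.sum_congr rfl fun x' _ => ?_
          simp only [← Finset.sum_mul]
      _ = Err h + ∑ x', docc (h + 1) x' * (Vf (h + 1) x' - V (h + 1) x') := by
          congr 1
          refine Finset.sum_congr rfl fun x' _ => ?_
          rw [hdrec h hh x']
      _ = Err h + G (h + 1) := rfl
  -- telescoping, downward from the horizon
  have key : ∀ n, n ≤ H → G (H + 1 - n) ≤ ∑ k ∈ Icc (H + 1 - n) H, Err k := by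
    intro n
    induction n with
    | zero =>
      intro _
      have hG0 : G (H + 1) = 0 := by
        simp [hGdef, hVfTop, hVtop]
      simp only [Nat.sub_zero]
      rw [Finset.Icc_eq_empty (by omega), Finset.sum_empty, hG0]
    | succ n ih =>
      intro hn
      have h1 : H + 1 - (n + 1) = H - n := by omega
      have hmem : H - n ∈ Icc 1 H := by simp only [mem_Icc]; omega
      have h2 : H - n + 1 = H + 1 - n := by omega
      have hstep := step (H - n) hmem
      rw [h2] at hstep
      have h3 := ih (by omega)
      have hins : insert (H - n) (Icc (H + 1 - n) H) = Icc (H - n) H := by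
        rw [show H + 1 - n = (H - n) + 1 by omega, Finset.Icc_add_one_left_eq_Ioc,
          Finset.Ioc_insert_left (by omega)]
      rw [h1]
      calc G (H - n) ≤ Err (H - n) + G (H + 1 - n) := hstep
        _ ≤ Err (H - n) + ∑ k ∈ Icc (H + 1 - n) H, Err k := by linarith
        _ = ∑ k ∈ Icc (H - n) H, Err k := by
            rw [← hins, Finset.sum_insert (by simp only [mem_Icc]; omega)]
  have hfin := key H le_rfl
  have h1H : H + 1 - H = 1 := by omega
  rw [h1H] at hfin
  have hG1 : G 1 = Vf 1 x1 - V 1 x1 := by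
    simp only [hGdef]
    simp [hd1, Finset.sum_ite_eq']
  rw [← hG1]
  exact hfin
end

section
/- Consider a finite-horizon two-player zero-sum Markov game with finite nonempty state set S, finite nonempty action sets A (max-player) and B (min-player), horizon H, transition kernels P_h : S x A x B -> (S -> R) with P_h(x,a,b,.) nonnegative and summing to 1 over S for each h in {1,...,H}, reward functions r_h : S x A x B -> R, and fixed initial state x_1 in S. For W : S -> R write (P_h W)(x,a,b) = sum_{x'} P_h(x,a,b,x') W(x'). Given a policy pair (mu, nu), where mu_h : S -> (A -> R) and nu_h : S -> (B -> R) assign probability vectors, define the value functions backward by V_{H+1}^{mu,nu} = 0 and V_h^{mu,nu}(x) = sum_{a,b} mu_h(x,a) nu_h(x,b) [ r_h(x,a,b) + (P_h V_{h+1}^{mu,nu})(x,a,b) ]; define the occupancy measures by d_1 = the point mass at x_1 and d_{h+1}(x') = sum_{x,a,b} d_h(x) mu_h(x,a) nu_h(x,b) P_h(x,a,b,x'), and for G : S x A x B -> R write E_{(mu,nu)}[G_h] = sum_{x,a,b} d_h(x) mu_h(x,a) nu_h(x,b) G(x,a,b). Let mu be any max-player policy and let g = (g_1, ..., g_{H+1})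 with g_h : S x A x B -> R and g_{H+1} = 0, and define V_{h,g}^{mu,dagger}(x) = min_{b in B} sum_a mu_h(x,a) g_h(x,a,b). Suppose the min-player policy nu is a best response with respect to (g, mu), i.e., for all h in {1,...,H} and all x in S, sum_{a,b} mu_h(x,a) nu_h(x,b) g_h(x,a,b) = V_{h,g}^{mu,dagger}(x). Then: V_1^{mu,nu}(x_1) - V_{1,g}^{mu,dagger}(x_1) = - sum_{h=1}^H E_{(mu,nu)}[ E_h^mu ], where E_h^mu(x,a,b) = g_h(x,a,b) - r_h(x,a,b) - (P_h V_{h+1,g}^{mu,dagger})(x,a,b). -/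
open Finset

/-- Lemma B.2 of the paper: value decomposition for the min-player in a
finite two-player zero-sum Markov game. -/
theorem stmt17
    {S A B : Type*} [Fintype S] [Fintype A] [Fintype B]
    [Nonempty S] [Nonempty A] [Nonempty B] [DecidableEq S]
    (H : ℕ) (hH : 0 < H)
    (P : ℕ → S → A → B → S → ℝ) (r : ℕ → S → A → B → ℝ) (x1 : S)
    (hPnn : ∀ h ∈ Icc 1 H, ∀ x a b x', 0 ≤ P h x a b x')
    (hPsum : ∀ h ∈ Icc 1 H, ∀ x a b, ∑ x', P h x a b x' = 1)
    (mu : ℕ → S → A → ℝ) (nu : ℕ → S → B → ℝ)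
    (hmunn : ∀ h ∈ Icc 1 H, ∀ x a, 0 ≤ mu h x a)
    (hmusum : ∀ h ∈ Icc 1 H, ∀ x, ∑ a, mu h x a = 1)
    (hnunn : ∀ h ∈ Icc 1 H, ∀ x b, 0 ≤ nu h x b)
    (hnusum : ∀ h ∈ Icc 1 H, ∀ x, ∑ b, nu h x b = 1)
    -- value functions of the joint policy (mu, nu), defined backward
    (V : ℕ → S → ℝ)
    (hVtop : ∀ x, V (H + 1) x = 0)
    (hVrec : ∀ h ∈ Icc 1 H, ∀ x,
      V h x = ∑ a, ∑ b, mu h x a * nu h x b *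
        (r h x a b + ∑ x', P h x a b x' * V (h + 1) x'))
    -- occupancy measures of the joint policy (mu, nu)
    (docc : ℕ → S → ℝ)
    (hd1 : ∀ x, docc 1 x = if x = x1 then 1 else 0)
    (hdrec : ∀ h ∈ Icc 1 H, ∀ x',
      docc (h + 1) x' = ∑ x, ∑ a, ∑ b,
        docc h x * mu h x a * nu h x b * P h x a b x')
    -- min-player hypothesis g and its best-response value function given mu
    (g : ℕ → S → A → B → ℝ)
    (hgtop : ∀ x a b, g (H + 1) x a b = 0)
    (Vg : ℕ → S → ℝ)
    (hVg : ∀ h x, Vg h x = Finset.univ.inf' Finset.univ_nonempty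
      (fun b => ∑ a, mu h x a * g h x a b))
    -- nu is a best response with respect to (g, mu)
    (hbr : ∀ h ∈ Icc 1 H, ∀ x,
      ∑ a, ∑ b, mu h x a * nu h x b * g h x a b = Vg h x) :
    V 1 x1 - Vg 1 x1 =
      -∑ h ∈ Icc 1 H, ∑ x, ∑ a, ∑ b,
        docc h x * mu h x a * nu h x b *
          (g h x a b - r h x a b - ∑ x', P h x a b x' * Vg (h + 1) x') := by

  -- Notation
  set E : ℕ → ℝ := fun h => ∑ x, ∑ a, ∑ b,
      docc h x * mu h x a * nu h x b *
        (g h x a b - r h x a b - ∑ x', P h x a b x' * Vg (h + 1) x') with hE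
  set D : ℕ → ℝ := fun h => ∑ x, docc h x * (V h x - Vg h x) with hD
  -- Vg at horizon H+1 is zero
  have hVgtop : ∀ x, Vg (H + 1) x = 0 := by
    intro x
    rw [hVg]
    have : (fun b : B => ∑ a, mu (H + 1) x a * g (H + 1) x a b) = fun _ => 0 := by
      funext b; simp [hgtop]
    rw [this]
    simp
  -- one-step decomposition
  have key : ∀ h ∈ Icc 1 H, D h = D (h + 1) - E h := by
    intro h hh
    have e1 : ∀ x, V h x - Vg h x
        = ∑ a, ∑ b, mu h x a * nu h x b *
            ((∑ x', P h x a b x' * (V (h + 1) x' - Vg (h + 1) x'))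
             - (g h x a b - r h x a b - ∑ x', P h x a b x' * Vg (h + 1) x')) := by
      intro x
      rw [hVrec h hh x, ← hbr h hh x, ← Finset.sum_sub_distrib]
      refine Finset.sum_congr rfl fun a _ => ?_
      rw [← Finset.sum_sub_distrib]
      refine Finset.sum_congr rfl fun b _ => ?_
      have hsplit : ∑ x', P h x a b x' * (V (h + 1) x' - Vg (h + 1) x')
          = (∑ x', P h x a b x' * V (h + 1) x')
            - ∑ x', P h x a b x' * Vg (h + 1) x' := by
        rw [← Finset.sum_sub_distrib]
        exact Finset.sum_congr rfl fun x' _ => by ring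
      rw [hsplit]; ring
    have lhs : D h
        = (∑ x, ∑ a, ∑ b, docc h x * mu h x a * nu h x b *
            (∑ x', P h x a b x' * (V (h + 1) x' - Vg (h + 1) x'))) - E h := by
      rw [hD, hE]
      simp only [e1]
      rw [← Finset.sum_sub_distrib]
      refine Finset.sum_congr rfl fun x _ => ?_
      rw [Finset.mul_sum, ← Finset.sum_sub_distrib]
      refine Finset.sum_congr rfl fun a _ => ?_
      rw [Finset.mul_sum, ← Finset.sum_sub_distrib]
      refine Finset.sum_congr rfl fun b _ => ?_
      ring
    have rhs : (∑ x, ∑ a, ∑ b, docc h x * mu h x a * nu h x b *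
            (∑ x', P h x a b x' * (V (h + 1) x' - Vg (h + 1) x'))) = D (h + 1) := by
      have swap : ∀ F : S → A → B → S → ℝ,
          (∑ x', ∑ x, ∑ a, ∑ b, F x a b x')
            = ∑ x, ∑ a, ∑ b, ∑ x', F x a b x' := by
        intro F
        rw [Finset.sum_comm]
        refine Finset.sum_congr rfl fun x _ => ?_
        rw [Finset.sum_comm]
        refine Finset.sum_congr rfl fun a _ => ?_
        rw [Finset.sum_comm]
      rw [hD]
      simp only [hdrec h hh, Finset.sum_mul]
      rw [swap (fun x a b x' => docc h x * mu h x a * nu h x b * P h x a b x'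
        * (V (h + 1) x' - Vg (h + 1) x'))]
      refine Finset.sum_congr rfl fun x _ => ?_
      refine Finset.sum_congr rfl fun a _ => ?_
      refine Finset.sum_congr rfl fun b _ => ?_
      rw [Finset.mul_sum]
      refine Finset.sum_congr rfl fun x' _ => ?_
      ring
    rw [lhs, rhs]
  -- telescoping
  have tele : ∀ n h, h + n = H + 1 → 1 ≤ h → D h = -∑ k ∈ Icc h H, E k := by
    intro n
    induction n with
    | zero =>
      intro h hhn _
      have hh : h = H + 1 := by omega
      subst hh
      have : Icc (H + 1) H = (∅ : Finset ℕ) := Finset.Icc_eq_empty (by omega)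
      rw [this]
      simp [hD, hVtop, hVgtop]
    | succ n ih =>
      intro h hhn h1
      have hhH : h ≤ H := by omega
      have hsplit : Icc h H = (Ioc h H).cons h (by simp) :=
        Finset.Icc_eq_cons_Ioc hhH
      rw [key h (Finset.mem_Icc.mpr ⟨h1, hhH⟩),
        ih (h + 1) (by omega) (by omega), hsplit, Finset.sum_cons,
        ← Finset.Icc_add_one_left_eq_Ioc]
      ring
  have hD1 : D 1 = V 1 x1 - Vg 1 x1 := by
    rw [hD]
    simp [hd1]
  calc V 1 x1 - Vg 1 x1 = D 1 := hD1.symm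
    _ = -∑ k ∈ Icc 1 H, E k := tele H 1 (by omega) le_rfl
    _ = _ := by rw [hE]
end
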